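/- arXiv:2203.06713 — 5 statements merged into one kernel-verified Lean document; each statement's English description precedes it below -/
import Mathlib

section
/- Let F be a field, q ∈ F, n ≥ 1, and w₁,…,w_n ∈ F with w_i ≠ q·w_j for all i ≠ j. For a,b ∈ F with q·a ≠ b set S(a,b) = −(q·b − a)/(q·a − b). Then ∑_{σ ∈ S_n} ∏_{1 ≤ i < j ≤ n, σ(i) > σ(j)} S(w_j, w_i) = [n]_q! · ∏_{1 ≤ i < j ≤ n} (w_i − w_j)/(w_i − q·w_j), where the sum is over all permutations σ of {1,…,n}, [k]_q = 1 + q + ⋯ + q^{k−1}, and [n]_q! = [1]_q·[2]_q⋯[n]_q. (In the paper's notation the left-hand side is ∑_σ A_σ(w_{σ⁻¹(1)},…,w_{σ⁻¹(n)}), where A_σ = ∏_{σ(i)>σ(j), i<j} S(w_{σ(j)}, w_{σ(i)}).) -/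
open Finset

section KeySum
open Polynomial

lemma key_sum {F : Type*} [Field F] (q : F) (hq : q ≠ 1) {m : ℕ}
    (v : Fin m → F) (hinj : Function.Injective v) (h0 : ∀ p, v p ≠ 0) :
    ∑ p : Fin m, ∏ j ∈ univ.erase p, (v p - q * v j) / (v p - v j)
      = ∑ i ∈ Finset.range m, q ^ i := by
  classical
  set g : F[X] := ∏ j : Fin m, (X - C (q * v j)) with hg
  set V : F[X] := ∏ j : Fin m, (X - C (v j)) with hV
  have hinj' : Set.InjOn v (univ : Finset (Fin m)) := fun a _ b _ h => hinj h
  have hgm : g.Monic := monic_prod_of_monic _ _ (fun i _ => monic_X_sub_C _)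
  have hVm : V.Monic := monic_prod_of_monic _ _ (fun i _ => monic_X_sub_C _)
  have hgd : g.degree = (m : WithBot ℕ) := by
    rw [hg, degree_prod]
    simp only [degree_X_sub_C, Finset.sum_const, card_univ, Fintype.card_fin, nsmul_eq_mul, mul_one]
  have hVd : V.degree = (m : WithBot ℕ) := by
    rw [hV, degree_prod]
    simp only [degree_X_sub_C, Finset.sum_const, card_univ, Fintype.card_fin, nsmul_eq_mul, mul_one]
  have hdeg : (g - V).degree < ((univ : Finset (Fin m)).card : WithBot ℕ) := by
    rcases Nat.eq_zero_or_pos m with hm | hm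
    · subst hm
      simp [hg, hV]
    · have := Polynomial.degree_sub_lt (hgd.trans hVd.symm) hgm.ne_zero
        (hgm.leadingCoeff.trans hVm.leadingCoeff.symm)
      simpa [hgd, Finset.card_univ] using this
  have hEq : g - V = Lagrange.interpolate univ v (fun p => (g - V).eval (v p)) :=
    Lagrange.eq_interpolate hinj' hdeg
  have h0eq := congrArg (Polynomial.eval 0) hEq
  have hgv : ∀ p, g.eval (v p) = ∏ j, (v p - q * v j) := by
    intro p
    rw [hg, eval_prod]
    simp
  have hVv : ∀ p, V.eval (v p) = 0 := fun p => by
    rw [hV, eval_prod]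
    exact Finset.prod_eq_zero (Finset.mem_univ p) (by simp)
  rw [Lagrange.interpolate_apply] at h0eq
  simp only [eval_sub, Polynomial.eval_finset_sum, eval_mul, eval_C, hgv, hVv, sub_zero,
    Lagrange.basis, Lagrange.basisDivisor, eval_prod, eval_X] at h0eq
  rw [hg, hV, eval_prod, eval_prod] at h0eq
  simp only [eval_sub, eval_X, eval_C] at h0eq
  -- h0eq : ∏ (0 - q v j) - ∏ (0 - v j) = ∑ p, (∏ j, (v p - q v j)) * ∏_{j ≠ p} ((v p - v j)⁻¹ * (0 - v j))
  have hterm : ∀ p : Fin m,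
      (∏ j, (v p - q * v j)) * ∏ j ∈ univ.erase p, ((v p - v j)⁻¹ * (0 - v j))
        = ((q - 1) * ∏ j, ((0:F) - v j)) * ∏ j ∈ univ.erase p, ((v p - q * v j) / (v p - v j)) := by
    intro p
    rw [← Finset.mul_prod_erase univ (fun j => v p - q * v j) (Finset.mem_univ p),
      mul_assoc, ← Finset.prod_mul_distrib]
    rw [show ((q - 1) * ∏ j, ((0:F) - v j))
        = ((q - 1) * (0 - v p)) * ∏ j ∈ univ.erase p, ((0:F) - v j) by
      rw [← Finset.mul_prod_erase univ (fun j => (0:F) - v j) (Finset.mem_univ p)]; ring]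
    rw [mul_assoc, ← Finset.prod_mul_distrib]
    congr 1
    · ring
    · exact Finset.prod_congr rfl fun j _ => by ring
  simp only [hterm] at h0eq
  rw [← Finset.mul_sum] at h0eq
  have hW' : (∏ j, ((0:F) - v j)) ≠ 0 :=
    Finset.prod_ne_zero_iff.mpr fun j _ => by simpa using h0 j
  have hq1 : q - 1 ≠ 0 := sub_ne_zero.mpr hq
  have hq0 : ∏ j : Fin m, (0 - q * v j) = q ^ m * ∏ j, ((0:F) - v j) := by
    rw [Finset.prod_congr rfl fun j (_ : j ∈ univ) => (by ring : (0:F) - q * v j = q * (0 - v j)),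
      Finset.prod_mul_distrib, Finset.prod_const, Finset.card_univ, Fintype.card_fin]
  rw [hq0] at h0eq
  rw [geom_sum_eq hq, eq_div_iff hq1]
  apply mul_right_cancel₀ hW'
  linear_combination -h0eq

end KeySum

lemma prod_pairs_succAbove {M : Type*} [CommMonoid M] {n : ℕ} (p : Fin (n + 1))
    (Q : Fin (n + 1) × Fin (n + 1) → Prop) [DecidablePred Q]
    (f : Fin (n + 1) × Fin (n + 1) → M) :
    ∏ pr ∈ univ.filter (fun pr : Fin n × Fin n =>
        pr.1 < pr.2 ∧ Q (p.succAbove pr.1, p.succAbove pr.2)),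
      f (p.succAbove pr.1, p.succAbove pr.2)
      = ∏ pr ∈ univ.filter (fun pr : Fin (n + 1) × Fin (n + 1) =>
          (pr.1 < pr.2 ∧ Q pr) ∧ pr.1 ≠ p ∧ pr.2 ≠ p), f pr := by
  classical
  have himage : (univ.filter fun pr : Fin (n + 1) × Fin (n + 1) =>
        (pr.1 < pr.2 ∧ Q pr) ∧ pr.1 ≠ p ∧ pr.2 ≠ p)
      = (univ.filter fun pr : Fin n × Fin n =>
          pr.1 < pr.2 ∧ Q (p.succAbove pr.1, p.succAbove pr.2)).image
          (fun pr => (p.succAbove pr.1, p.succAbove pr.2)) := by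
    ext ⟨i, j⟩
    simp only [mem_filter, mem_image, mem_univ, true_and, Prod.mk.injEq, Prod.exists]
    constructor
    · rintro ⟨⟨hlt, hQQ⟩, hi, hj⟩
      obtain ⟨a, ha⟩ := Fin.exists_succAbove_eq hi
      obtain ⟨b, hb⟩ := Fin.exists_succAbove_eq hj
      refine ⟨a, b, ⟨?_, ?_⟩, ha, hb⟩
      · rw [← ha, ← hb] at hlt
        exact Fin.succAbove_lt_succAbove_iff.mp hlt
      · rw [ha, hb]
        exact hQQ
    · rintro ⟨a, b, ⟨hab, hQ⟩, ha, hb⟩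
      subst ha; subst hb
      exact ⟨⟨Fin.succAbove_lt_succAbove_iff.mpr hab, hQ⟩,
        Fin.succAbove_ne p a, Fin.succAbove_ne p b⟩
  rw [himage, Finset.prod_image]
  intro x _ y _ hxy
  have h1 := Fin.succAbove_right_injective (p := p) (congrArg Prod.fst hxy)
  have h2 := Fin.succAbove_right_injective (p := p) (congrArg Prod.snd hxy)
  exact Prod.ext h1 h2

theorem generic_main {F : Type*} [Field F] (q : F) (hq : q ≠ 1) :
    ∀ (n : ℕ) (w : Fin n → F), Function.Injective w → (∀ i, w i ≠ 0) →
      (∀ i j : Fin n, i ≠ j → w i ≠ q * w j) →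
      (∑ σ : Equiv.Perm (Fin n),
          ∏ pr ∈ univ.filter (fun pr : Fin n × Fin n => pr.1 < pr.2 ∧ σ pr.2 < σ pr.1),
            (-(q * w pr.1 - w pr.2) / (q * w pr.2 - w pr.1)))
        = (∏ k ∈ Finset.range n, ∑ i ∈ Finset.range (k + 1), q ^ i) *
            ∏ pr ∈ univ.filter (fun pr : Fin n × Fin n => pr.1 < pr.2),
              (w pr.1 - w pr.2) / (w pr.1 - q * w pr.2) := by
  intro n
  induction n with
  | zero =>
      intro w _ _ _
      simp
  | succ n IH =>
      intro w hinj h0 hw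
      classical
      set Ψ : Fin (n + 1) × Equiv.Perm (Fin n) → Equiv.Perm (Fin (n + 1)) :=
        fun pt => ((finSuccEquiv' pt.1).trans (Equiv.optionCongr pt.2)).trans
          (finSuccEquiv' (0 : Fin (n + 1))).symm with hΨdef
      have hΨ0 : ∀ (p : Fin (n+1)) (τ : Equiv.Perm (Fin n)), Ψ (p, τ) p = 0 := by
        intro p τ
        simp [hΨdef, finSuccEquiv'_at]
      have hΨs : ∀ (p : Fin (n+1)) (τ : Equiv.Perm (Fin n)) (a : Fin n),
          Ψ (p, τ) (p.succAbove a) = (τ a).succ := by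
        intro p τ a
        simp [hΨdef, finSuccEquiv'_succAbove, finSuccEquiv'_symm_some]
      have hΨbij : Function.Bijective Ψ := by
        rw [Fintype.bijective_iff_injective_and_card]
        constructor
        · rintro ⟨p, τ⟩ ⟨p', τ'⟩ h
          have hp : p = p' := by
            have h1 : Ψ (p', τ') p = 0 := by rw [← h]; exact hΨ0 p τ
            exact (Ψ (p', τ')).injective (h1.trans (hΨ0 p' τ').symm)
          subst hp
          have hτ : τ = τ' := by
            refine Equiv.ext fun a => Fin.succ_injective _ ?_
            rw [← hΨs p τ a, h, hΨs]
          rw [hτ]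
        · simp [Fintype.card_perm, Nat.factorial_succ]
      have hsplit : ∀ (p : Fin (n+1)) (τ : Equiv.Perm (Fin n)),
          (∏ pr ∈ univ.filter (fun pr : Fin (n+1) × Fin (n+1) =>
              pr.1 < pr.2 ∧ Ψ (p, τ) pr.2 < Ψ (p, τ) pr.1),
            (-(q * w pr.1 - w pr.2) / (q * w pr.2 - w pr.1)))
          = (∏ i ∈ univ.filter (fun i => i < p), (-(q * w i - w p) / (q * w p - w i))) *
            ∏ pr ∈ univ.filter (fun pr : Fin n × Fin n => pr.1 < pr.2 ∧ τ pr.2 < τ pr.1),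
              (-(q * w (p.succAbove pr.1) - w (p.succAbove pr.2)) /
                (q * w (p.succAbove pr.2) - w (p.succAbove pr.1))) := by
        intro p τ
        have hpos : ∀ i : Fin (n+1), i ≠ p → 0 < Ψ (p, τ) i := by
          intro i hi
          refine Fin.pos_iff_ne_zero.mpr fun hz => hi ((Ψ (p, τ)).injective ?_)
          rw [hz, hΨ0 p τ]
        rw [← Finset.prod_filter_mul_prod_filter_not
            (univ.filter (fun pr : Fin (n+1) × Fin (n+1) =>
              pr.1 < pr.2 ∧ Ψ (p, τ) pr.2 < Ψ (p, τ) pr.1))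
            (fun pr => pr.2 = p), Finset.filter_filter, Finset.filter_filter]
        congr 1
        · have hset : univ.filter (fun pr : Fin (n+1) × Fin (n+1) =>
                (pr.1 < pr.2 ∧ Ψ (p, τ) pr.2 < Ψ (p, τ) pr.1) ∧ pr.2 = p)
              = (univ.filter (fun i : Fin (n+1) => i < p)).image (fun i => (i, p)) := by
            ext ⟨i, j⟩
            simp only [mem_filter, mem_univ, true_and, mem_image, Prod.mk.injEq]
            constructor
            · rintro ⟨⟨hlt, _⟩, rfl⟩
              exact ⟨i, hlt, rfl, rfl⟩
            · rintro ⟨a, ha, rfl, rfl⟩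
              refine ⟨⟨ha, ?_⟩, rfl⟩
              rw [hΨ0 p τ]
              exact hpos a (ne_of_lt ha)
          rw [hset, Finset.prod_image (fun x _ y _ h => congrArg Prod.fst h)]
        · have hfilter : univ.filter (fun pr : Fin (n+1) × Fin (n+1) =>
                (pr.1 < pr.2 ∧ Ψ (p, τ) pr.2 < Ψ (p, τ) pr.1) ∧ ¬ pr.2 = p)
              = univ.filter (fun pr : Fin (n+1) × Fin (n+1) =>
                (pr.1 < pr.2 ∧ Ψ (p, τ) pr.2 < Ψ (p, τ) pr.1) ∧ pr.1 ≠ p ∧ pr.2 ≠ p) := by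
            refine Finset.filter_congr fun pr _ => ?_
            constructor
            · rintro ⟨⟨hlt, hinv⟩, hj⟩
              refine ⟨⟨hlt, hinv⟩, fun hi => ?_, hj⟩
              rw [hi, hΨ0 p τ] at hinv
              exact Fin.not_lt_zero _ hinv
            · rintro ⟨h1, _, h3⟩
              exact ⟨h1, h3⟩
          rw [hfilter, ← prod_pairs_succAbove p
            (fun pr => Ψ (p, τ) pr.2 < Ψ (p, τ) pr.1)
            (fun pr => -(q * w pr.1 - w pr.2) / (q * w pr.2 - w pr.1))]
          refine Finset.prod_congr (Finset.filter_congr fun pr _ => ?_) (fun _ _ => rfl)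
          simp only [hΨs p τ, Fin.succ_lt_succ_iff]
      have hKp : ∀ p : Fin (n+1),
          (∏ i ∈ univ.filter (fun i => i < p), (-(q * w i - w p) / (q * w p - w i))) *
            (∏ pr ∈ univ.filter (fun pr : Fin n × Fin n => pr.1 < pr.2),
              ((w (p.succAbove pr.1) - w (p.succAbove pr.2)) /
                (w (p.succAbove pr.1) - q * w (p.succAbove pr.2))))
          = (∏ j ∈ univ.erase p, (w p - q * w j) / (w p - w j)) *
            ∏ pr ∈ univ.filter (fun pr : Fin (n+1) × Fin (n+1) => pr.1 < pr.2),
              (w pr.1 - w pr.2) / (w pr.1 - q * w pr.2) := by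
        intro p
        have hPn : (∏ pr ∈ univ.filter (fun pr : Fin n × Fin n => pr.1 < pr.2),
              ((w (p.succAbove pr.1) - w (p.succAbove pr.2)) /
                (w (p.succAbove pr.1) - q * w (p.succAbove pr.2))))
            = ∏ pr ∈ univ.filter (fun pr : Fin (n+1) × Fin (n+1) =>
                (pr.1 < pr.2 ∧ True) ∧ pr.1 ≠ p ∧ pr.2 ≠ p),
                (w pr.1 - w pr.2) / (w pr.1 - q * w pr.2) := by
          rw [← prod_pairs_succAbove p (fun _ => True)
              (fun pr => (w pr.1 - w pr.2) / (w pr.1 - q * w pr.2))]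
          simp only [and_true]
        have hP : (∏ pr ∈ univ.filter (fun pr : Fin (n+1) × Fin (n+1) => pr.1 < pr.2),
              (w pr.1 - w pr.2) / (w pr.1 - q * w pr.2))
            = (∏ pr ∈ univ.filter (fun pr : Fin (n+1) × Fin (n+1) =>
                  (pr.1 < pr.2 ∧ True) ∧ pr.1 ≠ p ∧ pr.2 ≠ p),
                (w pr.1 - w pr.2) / (w pr.1 - q * w pr.2))
              * ((∏ i ∈ univ.filter (fun i => i < p), (w i - w p) / (w i - q * w p))
              * (∏ j ∈ univ.filter (fun j => p < j), (w p - w j) / (w p - q * w j))) := by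
          rw [← Finset.prod_filter_mul_prod_filter_not
              (univ.filter (fun pr : Fin (n+1) × Fin (n+1) => pr.1 < pr.2))
              (fun pr => pr.2 = p), ← Finset.prod_filter_mul_prod_filter_not
              ((univ.filter (fun pr : Fin (n+1) × Fin (n+1) => pr.1 < pr.2)).filter
                (fun pr => ¬ pr.2 = p)) (fun pr => pr.1 = p)]
          simp only [Finset.filter_filter]
          have e1 : univ.filter (fun pr : Fin (n+1) × Fin (n+1) => pr.1 < pr.2 ∧ pr.2 = p)
              = (univ.filter (fun i : Fin (n+1) => i < p)).image (fun i => (i, p)) := by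
            ext ⟨i, j⟩
            simp only [mem_filter, mem_univ, true_and, mem_image, Prod.mk.injEq]
            constructor
            · rintro ⟨hlt, rfl⟩
              exact ⟨i, hlt, rfl, rfl⟩
            · rintro ⟨a, ha, rfl, rfl⟩
              exact ⟨ha, rfl⟩
          have e2 : univ.filter (fun pr : Fin (n+1) × Fin (n+1) =>
                (pr.1 < pr.2 ∧ ¬ pr.2 = p) ∧ pr.1 = p)
              = (univ.filter (fun j : Fin (n+1) => p < j)).image (fun j => (p, j)) := by
            ext ⟨i, j⟩
            simp only [mem_filter, mem_univ, true_and, mem_image, Prod.mk.injEq]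
            constructor
            · rintro ⟨⟨hlt, _⟩, rfl⟩
              exact ⟨j, hlt, rfl, rfl⟩
            · rintro ⟨b, hb, rfl, rfl⟩
              exact ⟨⟨hb, ne_of_gt hb⟩, rfl⟩
          have e3 : univ.filter (fun pr : Fin (n+1) × Fin (n+1) =>
                (pr.1 < pr.2 ∧ ¬ pr.2 = p) ∧ ¬ pr.1 = p)
              = univ.filter (fun pr : Fin (n+1) × Fin (n+1) =>
                (pr.1 < pr.2 ∧ True) ∧ pr.1 ≠ p ∧ pr.2 ≠ p) := by
            refine Finset.filter_congr fun pr _ => ?_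
            constructor
            · rintro ⟨⟨hlt, hj⟩, hi⟩
              exact ⟨⟨hlt, trivial⟩, hi, hj⟩
            · rintro ⟨⟨hlt, _⟩, hi, hj⟩
              exact ⟨⟨hlt, hj⟩, hi⟩
          rw [e1, e2, e3, Finset.prod_image (fun x _ y _ h => congrArg Prod.fst h),
            Finset.prod_image (fun x _ y _ h => congrArg Prod.snd h)]
          ring
        have hT : (∏ j ∈ univ.erase p, (w p - q * w j) / (w p - w j))
            = (∏ i ∈ univ.filter (fun i => i < p), (w p - q * w i) / (w p - w i))
              * (∏ j ∈ univ.filter (fun j => p < j), (w p - q * w j) / (w p - w j)) := by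
          rw [← Finset.prod_filter_mul_prod_filter_not (univ.erase p) (fun j => j < p)]
          congr 1
          · congr 1
            ext i
            simp only [mem_filter, mem_erase, mem_univ, true_and, and_true]
            exact ⟨fun h => h.2, fun h => ⟨ne_of_lt h, h⟩⟩
          · congr 1
            ext j
            simp only [mem_filter, mem_erase, mem_univ, true_and, and_true]
            constructor
            · rintro ⟨hne, hnlt⟩
              exact lt_of_le_of_ne (not_lt.mp hnlt) (Ne.symm hne)
            · intro h
              exact ⟨ne_of_gt h, not_lt.mpr (le_of_lt h)⟩
        have hta : (∏ i ∈ univ.filter (fun i => i < p), (w p - q * w i) / (w p - w i))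
              * (∏ i ∈ univ.filter (fun i => i < p), (w i - w p) / (w i - q * w p))
            = ∏ i ∈ univ.filter (fun i => i < p), (-(q * w i - w p) / (q * w p - w i)) := by
          rw [← Finset.prod_mul_distrib]
          refine Finset.prod_congr rfl fun i hi => ?_
          have hip : i ≠ p := ne_of_lt (mem_filter.mp hi).2
          have h1 : w p - w i ≠ 0 := sub_ne_zero.mpr fun h => hip.symm (hinj h)
          have h2 : w i - q * w p ≠ 0 := sub_ne_zero.mpr (hw i p hip)
          have h3 : q * w p - w i ≠ 0 := by
            rw [show q * w p - w i = -(w i - q * w p) by ring, neg_ne_zero]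
            exact h2
          rw [div_mul_div_comm, div_eq_div_iff (mul_ne_zero h1 h2) h3]
          ring
        have htb : (∏ j ∈ univ.filter (fun j => p < j), (w p - q * w j) / (w p - w j))
              * (∏ j ∈ univ.filter (fun j => p < j), (w p - w j) / (w p - q * w j)) = 1 := by
          rw [← Finset.prod_mul_distrib]
          refine Finset.prod_eq_one fun j hj => ?_
          have hpj : p ≠ j := ne_of_lt (mem_filter.mp hj).2
          have h1 : w p - w j ≠ 0 := sub_ne_zero.mpr fun h => hpj (hinj h)
          have h2 : w p - q * w j ≠ 0 := sub_ne_zero.mpr (hw p j hpj)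
          field_simp
        rw [hPn, hP, hT]
        have habc : ∀ (TA TB Pn A B C : F), TA * A = C → TB * B = 1 →
            C * Pn = TA * TB * (Pn * (A * B)) := by
          intro TA TB Pn A B C h1 h2
          rw [← h1]
          linear_combination (-(TA * A * Pn)) * h2
        exact habc _ _ _ _ _ _ hta htb
      have hsum : (∑ σ : Equiv.Perm (Fin (n+1)),
          ∏ pr ∈ univ.filter (fun pr : Fin (n+1) × Fin (n+1) =>
              pr.1 < pr.2 ∧ σ pr.2 < σ pr.1),
            (-(q * w pr.1 - w pr.2) / (q * w pr.2 - w pr.1)))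
          = ∑ pt : Fin (n+1) × Equiv.Perm (Fin n),
              ∏ pr ∈ univ.filter (fun pr : Fin (n+1) × Fin (n+1) =>
                pr.1 < pr.2 ∧ Ψ pt pr.2 < Ψ pt pr.1),
              (-(q * w pr.1 - w pr.2) / (q * w pr.2 - w pr.1)) :=
        (Fintype.sum_bijective Ψ hΨbij _ _ (fun pt => rfl)).symm
      rw [hsum, Fintype.sum_prod_type]
      have hIH : ∀ p : Fin (n+1),
          (∑ τ : Equiv.Perm (Fin n),
            ∏ pr ∈ univ.filter (fun pr : Fin n × Fin n => pr.1 < pr.2 ∧ τ pr.2 < τ pr.1),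
              (-(q * w (p.succAbove pr.1) - w (p.succAbove pr.2)) /
                (q * w (p.succAbove pr.2) - w (p.succAbove pr.1))))
          = (∏ k ∈ Finset.range n, ∑ i ∈ Finset.range (k + 1), q ^ i) *
              ∏ pr ∈ univ.filter (fun pr : Fin n × Fin n => pr.1 < pr.2),
                (w (p.succAbove pr.1) - w (p.succAbove pr.2)) /
                  (w (p.succAbove pr.1) - q * w (p.succAbove pr.2)) := by
        intro p
        exact IH (fun a => w (p.succAbove a))
          (fun a b h => Fin.succAbove_right_injective (hinj h))
          (fun a => h0 _)
          (fun a b hab => hw _ _ (fun h => hab (Fin.succAbove_right_injective h)))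
      calc ∑ p : Fin (n+1), ∑ τ : Equiv.Perm (Fin n),
            ∏ pr ∈ univ.filter (fun pr : Fin (n+1) × Fin (n+1) =>
              pr.1 < pr.2 ∧ Ψ (p, τ) pr.2 < Ψ (p, τ) pr.1),
              (-(q * w pr.1 - w pr.2) / (q * w pr.2 - w pr.1))
          = ∑ p : Fin (n+1),
              (∏ i ∈ univ.filter (fun i => i < p), (-(q * w i - w p) / (q * w p - w i))) *
              ((∏ k ∈ Finset.range n, ∑ i ∈ Finset.range (k + 1), q ^ i) *
                ∏ pr ∈ univ.filter (fun pr : Fin n × Fin n => pr.1 < pr.2),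
                  (w (p.succAbove pr.1) - w (p.succAbove pr.2)) /
                    (w (p.succAbove pr.1) - q * w (p.succAbove pr.2))) := by
            refine Finset.sum_congr rfl fun p _ => ?_
            rw [Finset.sum_congr rfl fun τ _ => hsplit p τ, ← Finset.mul_sum, hIH p]
        _ = (∏ k ∈ Finset.range n, ∑ i ∈ Finset.range (k + 1), q ^ i) *
              ∑ p : Fin (n+1), ((∏ j ∈ univ.erase p, (w p - q * w j) / (w p - w j)) *
                ∏ pr ∈ univ.filter (fun pr : Fin (n+1) × Fin (n+1) => pr.1 < pr.2),
                  (w pr.1 - w pr.2) / (w pr.1 - q * w pr.2)) := by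
            rw [Finset.mul_sum]
            refine Finset.sum_congr rfl fun p _ => ?_
            rw [← hKp p]
            ring
        _ = (∏ k ∈ Finset.range n, ∑ i ∈ Finset.range (k + 1), q ^ i) *
              ((∑ p : Fin (n+1), ∏ j ∈ univ.erase p, (w p - q * w j) / (w p - w j)) *
                ∏ pr ∈ univ.filter (fun pr : Fin (n+1) × Fin (n+1) => pr.1 < pr.2),
                  (w pr.1 - w pr.2) / (w pr.1 - q * w pr.2)) := by
            rw [Finset.sum_mul]
        _ = (∏ k ∈ Finset.range (n+1), ∑ i ∈ Finset.range (k + 1), q ^ i) *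
              ∏ pr ∈ univ.filter (fun pr : Fin (n+1) × Fin (n+1) => pr.1 < pr.2),
                (w pr.1 - w pr.2) / (w pr.1 - q * w pr.2) := by
            rw [key_sum q hq w hinj h0, Finset.prod_range_succ]
            ring


section defs
variable {R : Type*} [CommRing R]

def sumInv (q : R) {n : ℕ} (w : Fin n → R) : R :=
  ∑ σ : Equiv.Perm (Fin n),
    ∏ p ∈ univ.filter (fun p : Fin n × Fin n => p.1 < p.2),
      (if σ p.2 < σ p.1 then q * w p.1 - w p.2 else w p.1 - q * w p.2)

def rhsPoly (q : R) {n : ℕ} (w : Fin n → R) : R :=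
  (∏ k ∈ Finset.range n, ∑ i ∈ Finset.range (k + 1), q ^ i) *
    ∏ p ∈ univ.filter (fun p : Fin n × Fin n => p.1 < p.2), (w p.1 - w p.2)

lemma map_sumInv {S : Type*} [CommRing S] (f : R →+* S) (q : R) {n : ℕ} (w : Fin n → R) :
    f (sumInv q w) = sumInv (f q) (fun i => f (w i)) := by
  simp only [sumInv, map_sum, map_prod, apply_ite f, map_sub, map_mul]

lemma map_rhsPoly {S : Type*} [CommRing S] (f : R →+* S) (q : R) {n : ℕ} (w : Fin n → R) :
    f (rhsPoly q w) = rhsPoly (f q) (fun i => f (w i)) := by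
  simp only [rhsPoly, map_sum, map_prod, map_mul, map_sub, map_pow]

end defs

lemma clear_iff {F : Type*} [Field F] (q : F) {n : ℕ} (w : Fin n → F)
    (hw : ∀ i j : Fin n, i ≠ j → w i ≠ q * w j) :
    ((∑ σ : Equiv.Perm (Fin n),
        ∏ p ∈ univ.filter (fun p : Fin n × Fin n => p.1 < p.2 ∧ σ p.2 < σ p.1),
          (-(q * w p.1 - w p.2) / (q * w p.2 - w p.1)))
      = (∏ k ∈ Finset.range n, ∑ i ∈ Finset.range (k + 1), q ^ i) *
          ∏ p ∈ univ.filter (fun p : Fin n × Fin n => p.1 < p.2),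
            (w p.1 - w p.2) / (w p.1 - q * w p.2))
    ↔ sumInv q w = rhsPoly q w := by
  classical
  set D := ∏ p ∈ univ.filter (fun p : Fin n × Fin n => p.1 < p.2), (w p.1 - q * w p.2) with hDdef
  have hfac : ∀ p ∈ univ.filter (fun p : Fin n × Fin n => p.1 < p.2), w p.1 - q * w p.2 ≠ 0 :=
    fun p hp => sub_ne_zero.mpr (hw p.1 p.2 (ne_of_lt (mem_filter.mp hp).2))
  have hD : D ≠ 0 := Finset.prod_ne_zero_iff.mpr hfac
  have hL : (∑ σ : Equiv.Perm (Fin n),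
        ∏ p ∈ univ.filter (fun p : Fin n × Fin n => p.1 < p.2 ∧ σ p.2 < σ p.1),
          (-(q * w p.1 - w p.2) / (q * w p.2 - w p.1))) * D = sumInv q w := by
    unfold sumInv
    rw [Finset.sum_mul]
    refine Finset.sum_congr rfl fun σ _ => ?_
    rw [hDdef, Finset.prod_ite, Finset.filter_filter,
      ← Finset.prod_filter_mul_prod_filter_not (univ.filter (fun p : Fin n × Fin n => p.1 < p.2))
        (fun p => σ p.2 < σ p.1) (fun p => w p.1 - q * w p.2), Finset.filter_filter,
      Finset.filter_filter, ← mul_assoc]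
    congr 1
    rw [← Finset.prod_mul_distrib]
    refine Finset.prod_congr rfl fun pr hpr => ?_
    have h1 : w pr.1 - q * w pr.2 ≠ 0 :=
      sub_ne_zero.mpr (hw pr.1 pr.2 (ne_of_lt (mem_filter.mp hpr).2.1))
    rw [show q * w pr.2 - w pr.1 = -(w pr.1 - q * w pr.2) by ring, div_neg, neg_div, neg_neg,
      div_mul_cancel₀ _ h1]
  have hR : ((∏ k ∈ Finset.range n, ∑ i ∈ Finset.range (k + 1), q ^ i) *
      ∏ p ∈ univ.filter (fun p : Fin n × Fin n => p.1 < p.2),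
        (w p.1 - w p.2) / (w p.1 - q * w p.2)) * D = rhsPoly q w := by
    unfold rhsPoly
    rw [mul_assoc]
    congr 1
    rw [← Finset.prod_mul_distrib]
    exact Finset.prod_congr rfl fun pr hpr => div_mul_cancel₀ _ (hfac pr hpr)
  constructor
  · intro h
    rw [← hL, ← hR, h]
  · intro h
    exact mul_right_cancel₀ hD (by rw [hL, hR, h])

/-- Equation (5.1) of Wang–Waugh: the symmetrization identity
`∑_{σ ∈ S_n} ∏_{i<j, σ(i)>σ(j)} S(w_j, w_i) = [n]_q! · ∏_{i<j} (w_i − w_j)/(w_i − q·w_j)`,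
where `S(a,b) = −(q·b − a)/(q·a − b)`, `[k]_q = 1 + q + ⋯ + q^{k−1}` and
`[n]_q! = [1]_q · [2]_q ⋯ [n]_q`. -/
theorem symmetrization_identity {F : Type*} [Field F] (q : F) (n : ℕ) (hn : 1 ≤ n)
    (w : Fin n → F) (hw : ∀ i j : Fin n, i ≠ j → w i ≠ q * w j) :
    ∑ σ : Equiv.Perm (Fin n),
        ∏ p ∈ univ.filter (fun p : Fin n × Fin n => p.1 < p.2 ∧ σ p.2 < σ p.1),
          (-(q * w p.1 - w p.2) / (q * w p.2 - w p.1))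
      = (∏ k ∈ Finset.range n, ∑ i ∈ Finset.range (k + 1), q ^ i) *
          ∏ p ∈ univ.filter (fun p : Fin n × Fin n => p.1 < p.2),
            (w p.1 - w p.2) / (w p.1 - q * w p.2) := by
  classical
  refine (clear_iff q w hw).mpr ?_
  -- generic variables
  set R := MvPolynomial (Fin n ⊕ Unit) ℤ with hR
  set K := FractionRing R with hK
  set φ : R →+* K := algebraMap R K with hφdef
  have hφ : Function.Injective φ := IsFractionRing.injective R K
  set Q : R := MvPolynomial.X (Sum.inr ()) with hQ
  set W : Fin n → R := fun i => MvPolynomial.X (Sum.inl i) with hW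
  have hq1R : Q ≠ 1 := by
    intro h
    have := congrArg (MvPolynomial.eval (fun _ => (0:ℤ))) h
    simp [hQ] at this
  have hwR : ∀ i j : Fin n, i ≠ j → W i ≠ Q * W j := by
    intro i j hij h
    have := congrArg (MvPolynomial.eval (fun s => if s = Sum.inl i then (1:ℤ) else 0)) h
    simp [hQ, hW] at this
  have hqK : φ Q ≠ 1 := fun h => hq1R (hφ (by rwa [map_one]))
  have hinjK : Function.Injective (fun i => φ (W i)) := by
    intro a b h
    have := hφ h
    simp only [hW] at this
    exact Sum.inl_injective (MvPolynomial.X_injective this)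
  have h0K : ∀ i, φ (W i) ≠ 0 := by
    intro i h
    have : W i = 0 := hφ (by rwa [map_zero])
    exact MvPolynomial.X_ne_zero _ (by simpa [hW] using this)
  have hwK : ∀ i j : Fin n, i ≠ j → φ (W i) ≠ φ Q * φ (W j) := by
    intro i j hij h
    exact hwR i j hij (hφ (h.trans (map_mul φ Q (W j)).symm))
  have hgen := generic_main (φ Q) hqK n (fun i => φ (W i)) hinjK h0K hwK
  have hclr := (clear_iff (φ Q) (fun i => φ (W i)) hwK).mp hgen
  rw [← map_sumInv φ Q W, ← map_rhsPoly φ Q W] at hclr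
  have hRid : sumInv Q W = rhsPoly Q W := hφ hclr
  have hev := congrArg (MvPolynomial.eval₂Hom (Int.castRingHom F) (Sum.elim w (fun _ => q))) hRid
  rw [map_sumInv _ Q W, map_rhsPoly _ Q W] at hev
  have e1 : (MvPolynomial.eval₂Hom (Int.castRingHom F) (Sum.elim w (fun _ => q))) Q = q := by
    simp [hQ]
  have e2 : (fun i => (MvPolynomial.eval₂Hom (Int.castRingHom F)
      (Sum.elim w (fun _ => q))) (W i)) = w := by
    funext i
    simp [hW]
  rw [e1, e2] at hev
  exact hev
end

section
/- Let S be a countable set with a partial order and rank function ρ as described, and let T : S × S → ℝ be a stochastic matrix compatible with ρ. Let x, y, x', y' ∈ S with ρ(y) − ρ(x) = ρ(y') − ρ(x') = n for some integer n ≥ 1. For any state v let C(v) = { z : z ⋖ v }. Suppose there is a bijection ι : C(y) → C(y') such that T(z,y) = T(ι(z), y') for all z ∈ C(y), and such that T^{n−1}(x,z) = T^{n−1}(x', ι(z)) for all z ∈ C(y). Then T^n(x,y) = T^n(x',y'). (For a compatible chain, T^{ρ(y)−ρ(x)}(x,y) equals the probability ℙ_{x,H}(y) that the chain started at x ever hits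 y, so this gives the inductive property of the hitting-probability equivalence relation of Proposition 4.7(a).) -/
open Classical

/-- `n`-step transition probabilities of the stochastic matrix `T`:
`T⁰(x,y) = 1` if `x = y` and `0` otherwise, and `T^{n+1}(x,y) = ∑_z T^n(x,z)·T(z,y)`. -/
noncomputable def Tpow {S : Type*} (T : S → S → ℝ) : ℕ → S → S → ℝ
  | 0 => fun x y => if x = y then 1 else 0
  | n + 1 => fun x y => ∑' z, Tpow T n x z * T z y

/-- The inductive property of the hitting-probability equivalence relation of
Proposition 4.7(a): if `ρ(y) − ρ(x) = ρ(y') − ρ(x') = n ≥ 1` and there is a bijection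
`ι : C(y) → C(y')` between the sets of covered states matching both the one-step
probabilities into `y`, `y'` and the `(n−1)`-step probabilities from `x`, `x'`, then
`T^n(x,y) = T^n(x',y')`. -/
theorem Tpow_inductive_property {S : Type*} [Countable S] [PartialOrder S]
    (ρ : S → ℕ)
    (hρ_mono : ∀ x y : S, x < y → ρ x < ρ y)
    (hρ_cov : ∀ x y : S, x ⋖ y → ρ y = ρ x + 1)
    (T : S → S → ℝ)
    (hT_nonneg : ∀ x y : S, 0 ≤ T x y)
    (hT_sum : ∀ x : S, ∑' y, T x y = 1)
    (hT_compat : ∀ x y : S, 0 < T x y ↔ x ⋖ y)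
    (n : ℕ) (hn : 1 ≤ n) (x y x' y' : S)
    (hxy : ρ y = ρ x + n) (hxy' : ρ y' = ρ x' + n)
    (ι : {z : S // z ⋖ y} ≃ {z : S // z ⋖ y'})
    (hι_T : ∀ z : {z : S // z ⋖ y}, T z.val y = T (ι z).val y')
    (hι_Tpow : ∀ z : {z : S // z ⋖ y}, Tpow T (n - 1) x z.val = Tpow T (n - 1) x' (ι z).val) :
    Tpow T n x y = Tpow T n x' y' := by
  obtain ⟨m, rfl⟩ : ∃ m, n = m + 1 := ⟨n - 1, (Nat.succ_pred_eq_of_pos hn).symm⟩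
  have hzero : ∀ v w : S, ¬ v ⋖ w → T v w = 0 := fun v w h => by
    rcases (hT_nonneg v w).lt_or_eq with hlt | heq
    · exact absurd ((hT_compat v w).mp hlt) h
    · exact heq.symm
  have key : ∀ a b : S, Tpow T (m + 1) a b =
      ∑' z : {z : S // z ⋖ b}, Tpow T m a z.val * T z.val b := by
    intro a b
    show (∑' z, Tpow T m a z * T z b) = _
    refine (tsum_subtype_eq_of_support_subset (s := {z : S | z ⋖ b}) ?_).symm
    intro z hz
    simp only [Function.mem_support] at hz
    by_contra hc
    exact hz (by rw [hzero z b hc, mul_zero])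
  rw [key, key]
  rw [← Equiv.tsum_eq ι (fun w => Tpow T m x' w.val * T w.val y')]
  refine tsum_congr fun z => ?_
  have h1 := hι_Tpow z
  have h2 := hι_T z
  simp only [Nat.add_sub_cancel] at h1
  rw [h1, h2]
end

section
/- Let (Ω, 𝔽, ℙ) be a probability space, let V be a random variable with V ≥ 0 almost surely, and let E be an exponential random variable with rate λ > 0 that is independent of V. Let t > 0 and assume ℙ(V = t) = 0. Then ℙ( V < t and V + E > t ) = ℙ(V ≤ t) − e^{−λ t} · ∫₀ᵗ λ·e^{λ s}·ℙ(V ≤ s) ds. -/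
open MeasureTheory Real Set

private lemma exp_int (lam v t : ℝ) :
    ∫ s in v..t, lam * Real.exp (lam * s) = Real.exp (lam * t) - Real.exp (lam * v) := by
  have h : ∀ x ∈ Set.uIcc v t, HasDerivAt (fun x => Real.exp (lam * x)) (lam * Real.exp (lam * x)) x := by
    intro x _
    simpa [mul_comm] using ((hasDerivAt_id x).const_mul lam).exp
  exact intervalIntegral.integral_eq_sub_of_hasDerivAt h
    (Continuous.intervalIntegrable (μ := volume) (by continuity) v t)

set_option maxHeartbeats 1000000 in
/-- For `V ≥ 0` a.s. and `E` an exponential random variable with rate `λ > 0`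
independent of `V`, if `ℙ(V = t) = 0` then
`ℙ(V < t, V + E > t) = ℙ(V ≤ t) − e^{−λt}·∫₀ᵗ λ·e^{λs}·ℙ(V ≤ s) ds`. -/
theorem exp_holding_time_integration_by_parts {Ω : Type*} [MeasurableSpace Ω]
    (ℙ : Measure Ω) [IsProbabilityMeasure ℙ]
    (V E : Ω → ℝ) (hV : Measurable V) (hE : Measurable E)
    (hVnn : ∀ᵐ ω ∂ℙ, 0 ≤ V ω)
    (lam : ℝ) (hlam : 0 < lam)
    (hEexp : ∀ s : ℝ, 0 ≤ s → ℙ {ω | s < E ω} = ENNReal.ofReal (Real.exp (-lam * s)))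
    (hindep : ProbabilityTheory.IndepFun V E ℙ)
    (t : ℝ) (ht : 0 < t) (hVt : ℙ {ω | V ω = t} = 0) :
    (ℙ {ω | V ω < t ∧ t < V ω + E ω}).toReal
      = (ℙ {ω | V ω ≤ t}).toReal
        - Real.exp (-lam * t) *
            ∫ s in (0 : ℝ)..t, lam * Real.exp (lam * s) * (ℙ {ω | V ω ≤ s}).toReal := by
  set μ := Measure.map V ℙ with hμdef
  set ν := Measure.map E ℙ with hνdef
  have hμprob : IsProbabilityMeasure μ := Measure.isProbabilityMeasure_map hV.aemeasurable
  have hνprob : IsProbabilityMeasure ν := Measure.isProbabilityMeasure_map hE.aemeasurable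
  -- basic translations
  have hμIic : ∀ s : ℝ, μ (Set.Iic s) = ℙ {ω | V ω ≤ s} := by
    intro s
    rw [hμdef, Measure.map_apply hV measurableSet_Iic]
    rfl
  have hμnn : μ (Set.Iio 0) = 0 := by
    rw [hμdef, Measure.map_apply hV measurableSet_Iio]
    have h0 : ℙ {ω | ¬ 0 ≤ V ω} = 0 := hVnn
    refine measure_mono_null ?_ h0
    intro ω hω
    simp only [Set.mem_preimage, Set.mem_Iio] at hω
    simp [not_le, hω]
  have hμt : μ {t} = 0 := by
    rw [hμdef, Measure.map_apply hV (measurableSet_singleton t)]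
    exact hVt
  have hνIoi : ∀ s : ℝ, 0 ≤ s → ν (Set.Ioi s) = ENNReal.ofReal (Real.exp (-lam * s)) := by
    intro s hs
    rw [hνdef, Measure.map_apply hE measurableSet_Ioi]
    exact hEexp s hs
  have hμnn' : ∀ᵐ v ∂μ, 0 ≤ v := by
    rw [hμdef]
    exact (ae_map_iff hV.aemeasurable measurableSet_Ici).mpr hVnn
  -- a.e. set equalities
  have hae1 : (Set.Iio t : Set ℝ) =ᵐ[μ] Set.Ico 0 t := by
    rw [ae_eq_set]
    constructor
    · refine measure_mono_null ?_ hμnn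
      intro v hv
      simp only [Set.mem_diff, Set.mem_Iio, Set.mem_Ico, not_and] at hv
      simp only [Set.mem_Iio]
      by_contra h
      exact (hv.2 (not_lt.mp h)) hv.1
    · have : Set.Ico 0 t \ Set.Iio t = (∅ : Set ℝ) :=
        Set.diff_eq_empty.mpr Set.Ico_subset_Iio_self
      simp [this]
  have hae2 : (Set.Ico 0 t : Set ℝ) =ᵐ[μ] Set.Icc 0 t := by
    rw [ae_eq_set]
    constructor
    · have : Set.Ico 0 t \ Set.Icc 0 t = (∅ : Set ℝ) :=
        Set.diff_eq_empty.mpr Set.Ico_subset_Icc_self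
      simp [this]
    · refine measure_mono_null ?_ hμt
      intro v hv
      simp only [Set.mem_diff, Set.mem_Icc, Set.mem_Ico, not_and] at hv
      have : ¬ v < t := fun h => (hv.2 hv.1.1) h
      have : v = t := le_antisymm hv.1.2 (not_lt.mp this)
      simp [this]
  have hae3 : (Set.Iic t : Set ℝ) =ᵐ[μ] Set.Icc 0 t := by
    rw [ae_eq_set]
    constructor
    · refine measure_mono_null ?_ hμnn
      intro v hv
      simp only [Set.mem_diff, Set.mem_Iic, Set.mem_Icc, not_and] at hv
      simp only [Set.mem_Iio]
      by_contra h
      exact (hv.2 (not_lt.mp h)) hv.1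
    · have : Set.Icc 0 t \ Set.Iic t = (∅ : Set ℝ) :=
        Set.diff_eq_empty.mpr (fun v hv => hv.2)
      simp [this]
  -- LHS computation
  have hS : MeasurableSet {p : ℝ × ℝ | p.1 < t ∧ t < p.1 + p.2} :=
    (measurableSet_lt measurable_fst measurable_const).inter
      (measurableSet_lt measurable_const (measurable_fst.add measurable_snd))
  have hjoint : ℙ {ω | V ω < t ∧ t < V ω + E ω}
      = (μ.prod ν) {p : ℝ × ℝ | p.1 < t ∧ t < p.1 + p.2} := by
    rw [← (ProbabilityTheory.indepFun_iff_map_prod_eq_prod_map_map hV.aemeasurable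
        hE.aemeasurable).mp hindep,
      Measure.map_apply (hV.prodMk hE) hS]
    rfl
  have hslice : ∀ v : ℝ, ν (Prod.mk v ⁻¹' {p : ℝ × ℝ | p.1 < t ∧ t < p.1 + p.2})
      = Set.indicator (Set.Iio t) (fun v => ENNReal.ofReal (Real.exp (-lam * (t - v)))) v := by
    intro v
    by_cases hv : v < t
    · have hset : Prod.mk v ⁻¹' {p : ℝ × ℝ | p.1 < t ∧ t < p.1 + p.2} = Set.Ioi (t - v) := by
        ext e
        simp only [Set.mem_preimage, Set.mem_setOf_eq, Set.mem_Ioi]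
        constructor
        · rintro ⟨-, h⟩; linarith
        · intro h; exact ⟨hv, by linarith⟩
      rw [hset, hνIoi _ (by linarith)]
      exact (Set.indicator_of_mem (Set.mem_Iio.mpr hv)
        (fun v => ENNReal.ofReal (Real.exp (-lam * (t - v))))).symm
    · have hset : Prod.mk v ⁻¹' {p : ℝ × ℝ | p.1 < t ∧ t < p.1 + p.2} = (∅ : Set ℝ) := by
        ext e
        simp [hv]
      rw [hset, measure_empty]
      exact (Set.indicator_of_notMem (by simpa using hv)
        (fun v => ENNReal.ofReal (Real.exp (-lam * (t - v))))).symm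
  have hLHS : ℙ {ω | V ω < t ∧ t < V ω + E ω}
      = ∫⁻ v in Set.Icc 0 t, ENNReal.ofReal (Real.exp (-lam * (t - v))) ∂μ := by
    rw [hjoint, Measure.prod_apply hS]
    simp_rw [hslice]
    rw [lintegral_indicator measurableSet_Iio _,
      Measure.restrict_congr_set hae1, Measure.restrict_congr_set hae2]
  have hint1 : IntegrableOn (fun v => Real.exp (-lam * (t - v))) (Set.Icc 0 t) μ :=
    ContinuousOn.integrableOn_compact isCompact_Icc (Continuous.continuousOn (by fun_prop))
  have hA : (ℙ {ω | V ω < t ∧ t < V ω + E ω}).toReal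
      = ∫ v in Set.Icc 0 t, Real.exp (-lam * (t - v)) ∂μ := by
    rw [hLHS, ← ofReal_integral_eq_lintegral_ofReal hint1
        (Filter.Eventually.of_forall fun v => (Real.exp_pos _).le),
      ENNReal.toReal_ofReal (integral_nonneg fun v => (Real.exp_pos _).le)]
  -- Fubini step for the RHS integral
  have hTm : MeasurableSet {p : ℝ × ℝ | p.2 ≤ p.1} := measurableSet_le measurable_snd measurable_fst
  have hfin : IsFiniteMeasure (volume.restrict (Set.Ioc 0 t)) := by
    constructor
    rw [Measure.restrict_apply_univ, Real.volume_Ioc]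
    exact ENNReal.ofReal_lt_top
  have hfint : Integrable (Function.uncurry fun s v =>
      Set.indicator (Set.Iic s) (fun _ => lam * Real.exp (lam * s)) v)
      ((volume.restrict (Set.Ioc 0 t)).prod μ) := by
    have heq : (Function.uncurry fun s v =>
        Set.indicator (Set.Iic s) (fun _ => lam * Real.exp (lam * s)) v)
        = Set.indicator {p : ℝ × ℝ | p.2 ≤ p.1} (fun p => lam * Real.exp (lam * p.1)) := by
      ext p
      by_cases h : p.2 ≤ p.1 <;> simp [Function.uncurry, Set.indicator, h]
    have hmeas : Measurable (Function.uncurry fun s v =>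
        Set.indicator (Set.Iic s) (fun _ => lam * Real.exp (lam * s)) v) := by
      rw [heq]
      exact (measurable_const.mul
        (Real.measurable_exp.comp (measurable_const.mul measurable_fst))).indicator hTm
    have haefst : ∀ᵐ p ∂((volume.restrict (Set.Ioc 0 t)).prod μ), p.1 ∈ Set.Ioc 0 t := by
      have : (volume.restrict (Set.Ioc 0 t)).prod μ
          = (volume.prod μ).restrict (Set.Ioc 0 t ×ˢ (Set.univ : Set ℝ)) := by
        rw [← Measure.prod_restrict, Measure.restrict_univ]
      rw [this]
      filter_upwards [ae_restrict_mem (measurableSet_Ioc.prod MeasurableSet.univ)] with p hp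
      exact hp.1
    refine Integrable.mono' (integrable_const (lam * Real.exp (lam * t)))
      hmeas.aestronglyMeasurable ?_
    filter_upwards [haefst] with p hp
    rw [Function.uncurry]
    by_cases h : p.2 ≤ p.1
    · rw [Set.indicator_of_mem (Set.mem_Iic.mpr h) (fun _ => lam * Real.exp (lam * p.1))]
      rw [Real.norm_eq_abs, abs_of_nonneg (by positivity)]
      exact mul_le_mul_of_nonneg_left
        (Real.exp_le_exp.mpr (mul_le_mul_of_nonneg_left hp.2 hlam.le)) hlam.le
    · rw [Set.indicator_of_notMem (fun hh => h (Set.mem_Iic.mp hh))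
        (fun _ => lam * Real.exp (lam * p.1))]
      simp only [norm_zero]
      positivity
  have hG : (∫ s in (0:ℝ)..t, lam * Real.exp (lam * s) * (ℙ {ω | V ω ≤ s}).toReal)
      = ∫ v, (∫ s in Set.Ioc 0 t,
          Set.indicator (Set.Ici v) (fun s => lam * Real.exp (lam * s)) s) ∂μ := by
    rw [intervalIntegral.integral_of_le ht.le]
    have h1 : ∀ s : ℝ, lam * Real.exp (lam * s) * (ℙ {ω | V ω ≤ s}).toReal
        = ∫ v, Set.indicator (Set.Iic s) (fun _ => lam * Real.exp (lam * s)) v ∂μ := by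
      intro s
      rw [integral_indicator_const _ measurableSet_Iic, measureReal_def, hμIic s, smul_eq_mul, mul_comm]
    simp_rw [h1]
    rw [integral_integral_swap hfint]
    have h2 : ∀ v s : ℝ, Set.indicator (Set.Iic s) (fun _ => lam * Real.exp (lam * s)) v
        = Set.indicator (Set.Ici v) (fun s => lam * Real.exp (lam * s)) s := by
      intro v s
      by_cases h : v ≤ s <;> simp [Set.indicator, h]
    simp_rw [h2]
  -- inner integral
  have hinner : ∀ v : ℝ, 0 ≤ v →
      (∫ s in Set.Ioc 0 t, Set.indicator (Set.Ici v) (fun s => lam * Real.exp (lam * s)) s)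
      = Set.indicator (Set.Icc 0 t) (fun v => Real.exp (lam * t) - Real.exp (lam * v)) v := by
    intro v hv
    rw [setIntegral_indicator measurableSet_Ici]
    by_cases hvt : v ≤ t
    · have hae' : (Set.Ioc 0 t ∩ Set.Ici v : Set ℝ) =ᵐ[volume] Set.Ioc v t := by
        rw [ae_eq_set]
        constructor
        · refine measure_mono_null ?_ (volume_singleton (a := v))
          intro s hs
          simp only [Set.mem_diff, Set.mem_inter_iff, Set.mem_Ioc, Set.mem_Ici, not_and,
            Set.mem_singleton_iff] at hs ⊢
          rcases hs with ⟨⟨⟨h1, h2⟩, h3⟩, h4⟩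
          by_contra h5
          exact (h4 (lt_of_le_of_ne h3 (Ne.symm h5))) h2
        · have hsub : Set.Ioc v t ⊆ Set.Ioc 0 t ∩ Set.Ici v := fun s hs =>
            ⟨⟨lt_of_le_of_lt hv hs.1, hs.2⟩, hs.1.le⟩
          simp [Set.diff_eq_empty.mpr hsub]
      rw [setIntegral_congr_set hae', ← intervalIntegral.integral_of_le hvt, exp_int,
        Set.indicator_of_mem (Set.mem_Icc.mpr ⟨hv, hvt⟩)]
    · have hset : (Set.Ioc 0 t ∩ Set.Ici v : Set ℝ) = ∅ := by
        ext s
        simp only [Set.mem_inter_iff, Set.mem_Ioc, Set.mem_Ici, Set.mem_empty_iff_false,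
          iff_false, not_and]
        intro h1 h2
        linarith [h1.2]
      rw [hset]
      simp [Set.indicator_of_notMem (fun h : v ∈ Set.Icc 0 t => hvt h.2)]
  -- integrabilities on Icc
  have hint2 : IntegrableOn (fun v => Real.exp (lam * v)) (Set.Icc 0 t) μ :=
    ContinuousOn.integrableOn_compact isCompact_Icc (Continuous.continuousOn (by fun_prop))
  have hG2 : (∫ s in (0:ℝ)..t, lam * Real.exp (lam * s) * (ℙ {ω | V ω ≤ s}).toReal)
      = Real.exp (lam * t) * (μ (Set.Icc 0 t)).toReal
        - ∫ v in Set.Icc 0 t, Real.exp (lam * v) ∂μ := by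
    rw [hG, integral_congr_ae (hμnn'.mono fun v hv => hinner v hv),
      integral_indicator measurableSet_Icc,
      integral_sub (integrableOn_const (μ := μ) (s := Set.Icc 0 t) (C := Real.exp (lam * t)) (by
        exact (lt_of_le_of_lt (measure_mono (Set.subset_univ _)) (by simp)).ne)) hint2,
      setIntegral_const, smul_eq_mul, mul_comm, measureReal_def]
  have hMt : ℙ {ω | V ω ≤ t} = μ (Set.Icc 0 t) := by
    rw [← hμIic t]
    exact measure_congr hae3
  have hexp1 : Real.exp (-lam * t) * Real.exp (lam * t) = 1 := by
    rw [← Real.exp_add]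
    norm_num
  have hA2 : ∫ v in Set.Icc 0 t, Real.exp (-lam * (t - v)) ∂μ
      = Real.exp (-lam * t) * ∫ v in Set.Icc 0 t, Real.exp (lam * v) ∂μ := by
    rw [← integral_const_mul]
    apply integral_congr_ae
    filter_upwards with v
    rw [← Real.exp_add]
    ring_nf
  rw [hA, hA2, hMt, hG2, mul_sub, ← mul_assoc, hexp1, one_mul]
  ring
end

section
/- Let 0 < q < 1, N ≥ 2, R > 1, t ∈ ℝ, 1 ≤ k ≤ N−1, and integers M₁, …, M_N with M_k = M_{k+1}. Then the iterated circle integral over the circles |w₁| = R, …, |w_N| = R (all centered at the origin) of the function B(w₁,…,w_N) · ( q/w_k − 1/w_{k+1} ) · ∏_{j=1}^{N} (1 − w_j)^{−M_j − 1} · e^{−w_j t} equals 0. (The integrand is well defined on the contours: since R > 1 and 0 < q < 1, on the contours w_j ≠ 0, w_j ≠ 1, and w_i ≠ q·w_j for all i, j.) -/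
open Finset MeasureTheory Real

/-- `Bprod q w = ∏_{1 ≤ i < j ≤ N} (w_i − w_j)/(w_i − q·w_j)`. -/
noncomputable def Bprod (q : ℂ) {N : ℕ} (w : Fin N → ℂ) : ℂ :=
  ∏ p ∈ univ.filter (fun p : Fin N × Fin N => p.1 < p.2),
    (w p.1 - w p.2) / (w p.1 - q * w p.2)

/-- Iterated circle integral: `itCircleInt n c r f` integrates the `j`-th variable over
the circle of center `c j` and radius `r j`, for `j = 1, …, n`. -/
noncomputable def itCircleInt : (n : ℕ) → (Fin n → ℂ) → (Fin n → ℝ) → ((Fin n → ℂ) → ℂ) → ℂ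
  | 0, _, _, f => f (fun i => i.elim0)
  | n + 1, c, r, f =>
      ∮ z in C(c 0, r 0),
        itCircleInt n (fun i => c i.succ) (fun i => r i.succ) (fun v => f (Fin.cons z v))

open MeasureTheory Real in
/-- Iterated interval integral over `[0, 2π]` in each variable. -/
noncomputable def itII : (n : ℕ) → ((Fin n → ℝ) → ℂ) → ℂ
  | 0, f => f (fun i => i.elim0)
  | n + 1, f => ∫ θ in (0:ℝ)..(2*π), itII n (fun v => f (Fin.cons θ v))

lemma itII_const_mul (a : ℂ) : ∀ (n : ℕ) (f : (Fin n → ℝ) → ℂ),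
    itII n (fun θ => a * f θ) = a * itII n f := by
  intro n
  induction n with
  | zero => intro f; simp [itII]
  | succ n ih =>
    intro f
    simp only [itII, ih]
    rw [← intervalIntegral.integral_const_mul]

lemma itII_neg (n : ℕ) (f : (Fin n → ℝ) → ℂ) :
    itII n (fun θ => -f θ) = -itII n f := by
  simpa [neg_one_mul] using itII_const_mul (-1) n f

lemma itCircleInt_eq_itII : ∀ (n : ℕ) (c : Fin n → ℂ) (r : Fin n → ℝ)
    (f : (Fin n → ℂ) → ℂ),
    itCircleInt n c r f = itII n (fun θ =>
      (∏ j, deriv (circleMap (c j) (r j)) (θ j)) *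
        f (fun j => circleMap (c j) (r j) (θ j))) := by
  intro n
  induction n with
  | zero =>
    intro c r f
    simp only [itCircleInt, itII, Finset.univ_eq_empty, Finset.prod_empty, one_mul]
    congr 1
    funext i
    exact i.elim0
  | succ n ih =>
    intro c r f
    show (∮ z in C(c 0, r 0), itCircleInt n _ _ (fun v => f (Fin.cons z v))) = _
    rw [circleIntegral]
    simp only [ih, smul_eq_mul, itII]
    refine intervalIntegral.integral_congr fun θ _ => ?_
    rw [← itII_const_mul]
    refine congrArg (itII n) (funext fun v => ?_)
    rw [Fin.prod_univ_succ]
    simp only [Fin.cons_zero, Fin.cons_succ, ← mul_assoc]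
    congr 1
    refine congrArg f (funext fun j => ?_)
    refine Fin.cases ?_ ?_ j <;> simp


lemma continuous_cons {n : ℕ} :
    Continuous (fun p : ℝ × (Fin n → ℝ) => (Fin.cons p.1 p.2 : Fin (n+1) → ℝ)) := by
  refine continuous_pi fun i => ?_
  refine Fin.cases ?_ ?_ i
  · exact continuous_fst
  · intro j; exact (continuous_apply j).comp continuous_snd

universe u

lemma itII_continuous_param : ∀ (n : ℕ) {X : Type u} [TopologicalSpace X]
    (f : X → (Fin n → ℝ) → ℂ),
    Continuous (fun p : X × (Fin n → ℝ) => f p.1 p.2) →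
    Continuous (fun x => itII n (f x)) := by
  intro n
  induction n with
  | zero =>
    intro X _ f hf
    exact hf.comp (continuous_id.prodMk continuous_const)
  | succ n ih =>
    intro X _ f hf
    show Continuous fun x => ∫ θ in (0:ℝ)..(2*π), itII n (fun v => f x (Fin.cons θ v))
    have h2 : Continuous fun p : (X × ℝ) × (Fin n → ℝ) => f p.1.1 (Fin.cons p.1.2 p.2) := by
      have : Continuous fun p : (X × ℝ) × (Fin n → ℝ) =>
          (p.1.1, (Fin.cons p.1.2 p.2 : Fin (n+1) → ℝ)) :=
        (continuous_fst.fst).prodMk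
          (continuous_cons.comp ((continuous_fst.snd).prodMk continuous_snd))
      exact hf.comp this
    have h3 : Continuous
        (Function.uncurry fun (x : X) (θ : ℝ) => itII n fun v => f x (Fin.cons θ v)) :=
      ih (fun p : X × ℝ => fun v => f p.1 (Fin.cons p.2 v)) h2
    exact intervalIntegral.continuous_parametric_intervalIntegral_of_continuous' h3 0 (2*π)


open MeasureTheory Real in
lemma II_swap (g : ℝ → ℝ → ℂ) (hg : Continuous (Function.uncurry g)) :
    ∫ x in (0:ℝ)..(2*π), ∫ y in (0:ℝ)..(2*π), g x y
      = ∫ y in (0:ℝ)..(2*π), ∫ x in (0:ℝ)..(2*π), g x y := by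
  have h2π : (0:ℝ) ≤ 2*π := by positivity
  simp only [intervalIntegral.integral_of_le h2π]
  apply MeasureTheory.integral_integral_swap
  have : IntegrableOn (Function.uncurry g) (Set.Ioc 0 (2*π) ×ˢ Set.Ioc 0 (2*π))
      (volume.prod volume) := by
    exact (hg.continuousOn.integrableOn_compact (isCompact_Icc.prod isCompact_Icc)).mono_set
      (Set.prod_mono Set.Ioc_subset_Icc_self Set.Ioc_subset_Icc_self)
  rwa [IntegrableOn, ← Measure.prod_restrict] at this


lemma succ_swap {n : ℕ} (a b x : Fin n) :
    Equiv.swap a.succ b.succ x.succ = (Equiv.swap a b x).succ := by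
  rcases eq_or_ne x a with rfl | hxa
  · simp
  · rcases eq_or_ne x b with rfl | hxb
    · simp
    · rw [Equiv.swap_apply_of_ne_of_ne hxa hxb,
        Equiv.swap_apply_of_ne_of_ne (fun h => hxa (Fin.succ_injective _ h))
          (fun h => hxb (Fin.succ_injective _ h))]

lemma cons_comp_swap {n : ℕ} (a b : Fin n) (x : ℝ) (v : Fin n → ℝ) :
    (Fin.cons x v : Fin (n+1) → ℝ) ∘ (Equiv.swap a.succ b.succ)
      = Fin.cons x (v ∘ Equiv.swap a b) := by
  funext i
  refine Fin.cases ?_ ?_ i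
  · simp [Equiv.swap_apply_of_ne_of_ne (Fin.succ_ne_zero a).symm (Fin.succ_ne_zero b).symm]
  · intro j
    simp [succ_swap]

lemma itII_swap_front (n : ℕ) (f : (Fin (n+2) → ℝ) → ℂ) (hf : Continuous f) :
    itII (n+2) (fun θ => f (θ ∘ Equiv.swap ⟨0, by omega⟩ ⟨1, by omega⟩)) = itII (n+2) f := by
  have key : ∀ (x y : ℝ) (u : Fin n → ℝ),
      (Fin.cons x (Fin.cons y u) : Fin (n+2) → ℝ) ∘
        (Equiv.swap ⟨0, by omega⟩ ⟨1, by omega⟩)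
        = Fin.cons y (Fin.cons x u) := by
    intro x y u
    funext i
    refine Fin.cases ?_ (fun j => Fin.cases ?_ (fun a => ?_) j) i <;>
      simp [Function.comp, Equiv.swap_apply_def, Fin.ext_iff]
  have hG : Continuous (Function.uncurry (fun x y =>
      itII n (fun u => f (Fin.cons x (Fin.cons y u))))) := by
    refine itII_continuous_param n
      (fun p : ℝ × ℝ => fun u => f (Fin.cons p.1 (Fin.cons p.2 u))) ?_
    refine hf.comp ?_
    have c2 : Continuous fun p : (ℝ × ℝ) × (Fin n → ℝ) =>
        (Fin.cons p.1.2 p.2 : Fin (n+1) → ℝ) :=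
      continuous_cons.comp ((continuous_fst.snd).prodMk continuous_snd)
    exact continuous_cons.comp ((continuous_fst.fst).prodMk c2)
  simp only [itII]
  simp only [key]
  exact (II_swap _ hG).symm

lemma itII_swap : ∀ (i n : ℕ) (h : i + 1 < n) (f : (Fin n → ℝ) → ℂ),
    Continuous f →
    itII n (fun θ => f (θ ∘ Equiv.swap ⟨i, by omega⟩ ⟨i+1, h⟩)) = itII n f := by
  intro i
  induction i with
  | zero =>
    intro n h f hf
    match n, h with
    | (m+2), h => exact itII_swap_front m f hf
  | succ j ih =>
    intro n h f hf
    match n, h with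
    | (m+1), h =>
      have hj : j + 1 < m := by omega
      show itII (m+1) _ = itII (m+1) f
      simp only [itII]
      refine intervalIntegral.integral_congr fun x _ => ?_
      have hb1 : (⟨j+1, by omega⟩ : Fin (m+1)) = (⟨j, by omega⟩ : Fin m).succ := rfl
      have hb2 : (⟨j+2, h⟩ : Fin (m+1)) = (⟨j+1, hj⟩ : Fin m).succ := rfl
      have hcons : ∀ v : Fin m → ℝ,
          (Fin.cons x v : Fin (m+1) → ℝ) ∘ Equiv.swap ⟨j+1, by omega⟩ ⟨j+2, h⟩
            = Fin.cons x (v ∘ Equiv.swap ⟨j, by omega⟩ ⟨j+1, hj⟩) := by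
        intro v
        rw [hb1, hb2]
        exact cons_comp_swap _ _ x v
      have hfc : Continuous fun v : Fin m → ℝ => f (Fin.cons x v) :=
        hf.comp (continuous_cons.comp (continuous_const.prodMk continuous_id))
      calc itII m (fun v => (fun θ => f (θ ∘ Equiv.swap ⟨j+1, by omega⟩ ⟨j+2, h⟩))
              (Fin.cons x v))
          = itII m (fun v => (fun w => f (Fin.cons x w))
              (v ∘ Equiv.swap ⟨j, by omega⟩ ⟨j+1, hj⟩)) := by
            simp only [hcons]
        _ = itII m (fun v => f (Fin.cons x v)) := ih m hj _ hfc

lemma swap_adj_mem {N : ℕ} {a b i j : Fin N} (hadj : (a:ℕ) + 1 = (b:ℕ))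
    (hij : i < j) (hne : (i, j) ≠ (a, b)) :
    Equiv.swap a b i < Equiv.swap a b j ∧ (Equiv.swap a b i, Equiv.swap a b j) ≠ (a, b) := by
  have hab : a ≠ b := by intro h; rw [h] at hadj; omega
  have hijv : (i:ℕ) < (j:ℕ) := hij
  constructor
  · by_cases hia : i = a
    · subst hia
      have hjb : j ≠ b := by
        intro h; exact hne (by rw [h])
      have hja : i ≠ j := Fin.ne_of_lt hij
      rw [Equiv.swap_apply_left, Equiv.swap_apply_of_ne_of_ne (Fin.ne_of_gt hij) hjb]
      have : (j:ℕ) ≠ (b:ℕ) := fun h => hjb (Fin.ext h)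
      rw [Fin.lt_def]; omega
    · by_cases hib : i = b
      · subst hib
        have hja : j ≠ a := by
          intro h; subst h; rw [Fin.lt_def] at hij; omega
        have hjb : j ≠ i := Fin.ne_of_gt hij
        rw [Equiv.swap_apply_right, Equiv.swap_apply_of_ne_of_ne hja hjb]
        rw [Fin.lt_def]
        have : (a:ℕ) < (i:ℕ) := by omega
        omega
      · by_cases hja : j = a
        · subst hja
          rw [Equiv.swap_apply_of_ne_of_ne hia hib, Equiv.swap_apply_left]
          rw [Fin.lt_def]
          have : (i:ℕ) ≠ (j:ℕ) := fun h => hia (Fin.ext h)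
          omega
        · by_cases hjb : j = b
          · subst hjb
            rw [Equiv.swap_apply_of_ne_of_ne hia hib, Equiv.swap_apply_right]
            rw [Fin.lt_def]
            have : (i:ℕ) ≠ (a:ℕ) := fun h => hia (Fin.ext h)
            omega
          · rw [Equiv.swap_apply_of_ne_of_ne hia hib,
              Equiv.swap_apply_of_ne_of_ne hja hjb]
            exact hij
  · intro h
    rw [Prod.mk.injEq] at h
    have h1 : i = b := by
      have := congrArg (Equiv.swap a b) h.1
      simpa using this
    have h2 : j = a := by
      have := congrArg (Equiv.swap a b) h.2
      simpa using this
    subst h1; subst h2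
    rw [Fin.lt_def] at hij; omega

lemma Bprod_swap_adj (q : ℂ) {N : ℕ} (a b : Fin N) (hadj : (a:ℕ) + 1 = (b:ℕ))
    (w : Fin N → ℂ) :
    Bprod q (w ∘ Equiv.swap a b)
        = ((w b - w a) / (w b - q * w a)) *
          ∏ p ∈ (univ.filter (fun p : Fin N × Fin N => p.1 < p.2)).erase (a, b),
            (w p.1 - w p.2) / (w p.1 - q * w p.2) ∧
    Bprod q w
        = ((w a - w b) / (w a - q * w b)) *
          ∏ p ∈ (univ.filter (fun p : Fin N × Fin N => p.1 < p.2)).erase (a, b),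
            (w p.1 - w p.2) / (w p.1 - q * w p.2) := by
  have haltb : a < b := by rw [Fin.lt_def]; omega
  have hmemS : (a, b) ∈ univ.filter (fun p : Fin N × Fin N => p.1 < p.2) := by
    simp [haltb]
  refine ⟨?_, (Finset.mul_prod_erase _ _ hmemS).symm⟩
  unfold Bprod
  rw [← Finset.mul_prod_erase _ _ hmemS]
  simp only [Function.comp_apply, Equiv.swap_apply_left, Equiv.swap_apply_right]
  congr 1
  refine Finset.prod_nbij' (fun p => (Equiv.swap a b p.1, Equiv.swap a b p.2))
    (fun p => (Equiv.swap a b p.1, Equiv.swap a b p.2)) ?_ ?_ ?_ ?_ ?_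
  · intro p hp
    simp only [Finset.mem_erase, Finset.mem_filter, Finset.mem_univ, true_and] at hp ⊢
    exact (swap_adj_mem hadj hp.2 hp.1).symm
  · intro p hp
    simp only [Finset.mem_erase, Finset.mem_filter, Finset.mem_univ, true_and] at hp ⊢
    exact (swap_adj_mem hadj hp.2 hp.1).symm
  · intro p _; simp
  · intro p _; simp
  · intro p _; rfl

/-- If `M_k = M_{k+1}` then the iterated circle integral (over circles of radius `R > 1`
centered at the origin) of
`B(w₁,…,w_N)·(q/w_k − 1/w_{k+1})·∏_j (1 − w_j)^{−M_j−1}·e^{−w_j t}` vanishes.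
Indices are 1-indexed in the statement, so the 0-indexed slots are `⟨k−1⟩`, `⟨k⟩`. -/
theorem circleIntegral_antisym_factor_eq_zero (q : ℝ) (hq0 : 0 < q) (hq1 : q < 1)
    (N : ℕ) (hN : 2 ≤ N) (R : ℝ) (hR : 1 < R) (t : ℝ)
    (k : ℕ) (hk1 : 1 ≤ k) (hk2 : k ≤ N - 1)
    (M : Fin N → ℤ) (hM : M ⟨k - 1, by omega⟩ = M ⟨k, by omega⟩) :
    itCircleInt N (fun _ => 0) (fun _ => R)
      (fun w => Bprod (q : ℂ) w *
        ((q : ℂ) / w ⟨k - 1, by omega⟩ - 1 / w ⟨k, by omega⟩) *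
        ∏ j : Fin N, ((1 - w j) ^ (-(M j) - 1) * Complex.exp (-(w j) * (t : ℂ))))
      = 0 := by
  have hkN : k < N := by omega
  have hk1N : k - 1 < N := by omega
  set a : Fin N := ⟨k - 1, hk1N⟩ with ha
  set b : Fin N := ⟨k, hkN⟩ with hb
  have hadj : (a:ℕ) + 1 = (b:ℕ) := by simp [ha, hb]; omega
  have hR0 : (0:ℝ) < R := lt_trans one_pos hR
  have habs : ∀ s : ℝ, ‖circleMap 0 R s‖ = R := fun s => by
    simp [norm_circleMap_zero, abs_of_pos hR0]
  have hz0 : ∀ s : ℝ, circleMap 0 R s ≠ 0 := by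
    intro s h
    have := habs s
    rw [h] at this
    simp at this
    linarith
  have hz1 : ∀ s : ℝ, (1:ℂ) - circleMap 0 R s ≠ 0 := by
    intro s h
    have h2 : circleMap 0 R s = 1 := by linear_combination -h
    have := habs s
    rw [h2] at this
    simp at this
    linarith
  have hzq : ∀ s s' : ℝ, circleMap 0 R s - (q:ℂ) * circleMap 0 R s' ≠ 0 := by
    intro s s' h
    have h2 : circleMap 0 R s = (q:ℂ) * circleMap 0 R s' := by linear_combination h
    have h3 := congrArg (‖·‖) h2
    rw [norm_mul, habs, habs, Complex.norm_real, Real.norm_eq_abs, abs_of_pos hq0] at h3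
    nlinarith
  have key : ∀ (G : (Fin N → ℝ) → ℂ), Continuous G →
      (∀ θ, G (θ ∘ Equiv.swap a b) = -G θ) → itII N G = 0 := by
    intro G hc hanti
    have h := itII_swap (k-1) N (by omega) G hc
    have hb' : (⟨k-1+1, by omega⟩ : Fin N) = b := by
      apply Fin.ext; simp [hb]; omega
    have ha' : (⟨k-1, by omega⟩ : Fin N) = a := rfl
    rw [hb', ha'] at h
    simp only [hanti] at h
    rw [itII_neg] at h
    linear_combination -h/2
  rw [itCircleInt_eq_itII]
  beta_reduce
  refine key _ ?_ ?_
  · -- continuity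
    have hcw : ∀ j : Fin N, Continuous fun θ : Fin N → ℝ => circleMap 0 R (θ j) :=
      fun j => (continuous_circleMap 0 R).comp (continuous_apply j)
    refine Continuous.mul ?_ (Continuous.mul (Continuous.mul ?_ ?_) ?_)
    · simp only [deriv_circleMap]
      exact continuous_finset_prod _ fun j _ =>
        ((continuous_circleMap 0 R).comp (continuous_apply j)).mul continuous_const
    · unfold Bprod
      exact continuous_finset_prod _ fun p _ =>
        Continuous.div ((hcw p.1).sub (hcw p.2))
          ((hcw p.1).sub (continuous_const.mul (hcw p.2))) (fun θ => hzq _ _)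
    · exact (Continuous.div continuous_const (hcw a) fun θ => hz0 _).sub
        (Continuous.div continuous_const (hcw b) fun θ => hz0 _)
    · refine continuous_finset_prod _ fun j _ => Continuous.mul ?_ ?_
      · exact Continuous.zpow₀ (continuous_const.sub (hcw j)) _ (fun θ => Or.inl (hz1 _))
      · exact Complex.continuous_exp.comp (((hcw j).neg).mul continuous_const)
  · -- antisymmetry
    intro θ
    beta_reduce
    simp only [Function.comp_apply]
    have hD : (∏ j, deriv (circleMap 0 R) (θ (Equiv.swap a b j)))
        = ∏ j, deriv (circleMap 0 R) (θ j) :=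
      Equiv.prod_comp (Equiv.swap a b) (fun j => deriv (circleMap 0 R) (θ j))
    have hMσ : ∀ j, M (Equiv.swap a b j) = M j := by
      intro j
      rcases eq_or_ne j a with rfl | hja
      · rw [Equiv.swap_apply_left]; exact hM.symm
      · rcases eq_or_ne j b with rfl | hjb
        · rw [Equiv.swap_apply_right]; exact hM
        · rw [Equiv.swap_apply_of_ne_of_ne hja hjb]
    have hE : (∏ j, ((1 - circleMap 0 R (θ (Equiv.swap a b j))) ^ (-(M j) - 1) *
          Complex.exp (-(circleMap 0 R (θ (Equiv.swap a b j))) * (t:ℂ))))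
        = ∏ j, ((1 - circleMap 0 R (θ j)) ^ (-(M j) - 1) *
            Complex.exp (-(circleMap 0 R (θ j)) * (t:ℂ))) := by
      rw [Finset.prod_congr rfl (fun j (_ : j ∈ univ) => by rw [← hMσ j])]
      exact Equiv.prod_comp (Equiv.swap a b)
        (fun j => (1 - circleMap 0 R (θ j)) ^ (-(M j) - 1) *
          Complex.exp (-(circleMap 0 R (θ j)) * (t:ℂ)))
    obtain ⟨hB1, hB2⟩ := Bprod_swap_adj (q:ℂ) a b hadj (fun j => circleMap 0 R (θ j))
    have hB1' : Bprod (q:ℂ) (fun j => circleMap 0 R (θ (Equiv.swap a b j)))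
        = ((circleMap 0 R (θ b) - circleMap 0 R (θ a)) /
            (circleMap 0 R (θ b) - (q:ℂ) * circleMap 0 R (θ a))) *
          ∏ p ∈ (univ.filter (fun p : Fin N × Fin N => p.1 < p.2)).erase (a, b),
            (circleMap 0 R (θ p.1) - circleMap 0 R (θ p.2)) /
              (circleMap 0 R (θ p.1) - (q:ℂ) * circleMap 0 R (θ p.2)) := hB1
    rw [hD, Equiv.swap_apply_left, Equiv.swap_apply_right, hE, hB1', hB2]
    have hfield : (circleMap 0 R (θ b) - circleMap 0 R (θ a)) /
          (circleMap 0 R (θ b) - (q:ℂ) * circleMap 0 R (θ a)) *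
          ((q:ℂ) / circleMap 0 R (θ b) - 1 / circleMap 0 R (θ a))
        = -((circleMap 0 R (θ a) - circleMap 0 R (θ b)) /
            (circleMap 0 R (θ a) - (q:ℂ) * circleMap 0 R (θ b)) *
            ((q:ℂ) / circleMap 0 R (θ a) - 1 / circleMap 0 R (θ b))) := by
      have h1 : circleMap 0 R (θ a) ≠ 0 := hz0 _
      have h2 : circleMap 0 R (θ b) ≠ 0 := hz0 _
      have h3 : circleMap 0 R (θ a) - (q:ℂ) * circleMap 0 R (θ b) ≠ 0 := hzq _ _
      have h4 : circleMap 0 R (θ b) - (q:ℂ) * circleMap 0 R (θ a) ≠ 0 := hzq _ _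
      rw [div_sub_div _ _ h2 h1, div_sub_div _ _ h1 h2, div_mul_div_comm, div_mul_div_comm,
        ← neg_div, div_eq_div_iff (mul_ne_zero h4 (mul_ne_zero h2 h1))
          (mul_ne_zero h3 (mul_ne_zero h1 h2))]
      ring
    linear_combination ((∏ j, deriv (circleMap 0 R) (θ j)) *
      (∏ p ∈ (univ.filter (fun p : Fin N × Fin N => p.1 < p.2)).erase (a, b),
        (circleMap 0 R (θ p.1) - circleMap 0 R (θ p.2)) /
          (circleMap 0 R (θ p.1) - (q:ℂ) * circleMap 0 R (θ p.2))) *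
      (∏ j, ((1 - circleMap 0 R (θ j)) ^ (-(M j) - 1) *
        Complex.exp (-(circleMap 0 R (θ j)) * (t:ℂ))))) * hfield
end

section
/- Let 0 < q < 1, N ≥ 1, R > 1, λ ∈ ℝ, and let n ≥ 1 be an integer. Let M₁, …, M_N be nonnegative integers and let 1 ≤ j ≤ k ≤ N be indices with M_j = M_{j+1} = ⋯ = M_k. For 1 ≤ a ≤ N define I_a as the iterated circle integral over the circles |w₁| = R, …, |w_N| = R (centered at the origin) of the function w_a · ( ∑_{p=0}^{n−2} λ^p (w₁ + ⋯ + w_N)^{n−2−p} ) · B(w₁,…,w_N) · ∏_{i=1}^{N} (1 − w_i)^{−M_i − 1} / w_i, where the middle factor is the polynomial (λ^{n−1} − (w₁+⋯+w_N)^{n−1})/(λ − (w₁+⋯+w_N)) (interpreted as 0 when n = 1). Then I_k = q^{j−k} · I_j. -/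
set_option maxRecDepth 4000

open Finset

/-- The integrand of the integral `I_a`: `w_a · (∑_{p=0}^{n−2} λ^p (w₁+⋯+w_N)^{n−2−p})
· B(w₁,…,w_N) · ∏_i (1 − w_i)^{−M_i−1}/w_i`, the middle factor being the polynomial form
of `(λ^{n−1} − (w₁+⋯+w_N)^{n−1})/(λ − (w₁+⋯+w_N))` (interpreted as `0` when `n = 1`). -/
noncomputable def integrandI (lam : ℝ) (n : ℕ) {N : ℕ} (q : ℝ) (M : Fin N → ℕ)
    (a : Fin N) (w : Fin N → ℂ) : ℂ :=
  w a * (∑ p ∈ Finset.range (n - 1), (lam : ℂ) ^ p * (∑ i, w i) ^ (n - 2 - p)) *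
    Bprod (q : ℂ) w * ∏ i : Fin N, (1 - w i) ^ (-(M i : ℤ) - 1) / w i

private def swE {N : ℕ} (a b : Fin N) : Fin N × Fin N → Fin N × Fin N :=
  fun p => (Equiv.swap a b p.1, Equiv.swap a b p.2)

lemma swE_invol {N : ℕ} (a b : Fin N) (p : Fin N × Fin N) : swE a b (swE a b p) = p := by
  simp [swE]

lemma mem_image_swE {N : ℕ} (a b : Fin N) (s : Finset (Fin N × Fin N)) (p : Fin N × Fin N) :
    p ∈ s.image (swE a b) ↔ swE a b p ∈ s := by
  simp only [Finset.mem_image]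
  constructor
  · rintro ⟨x, hx, rfl⟩; rwa [swE_invol]
  · intro h; exact ⟨_, h, swE_invol a b p⟩

lemma swap_lt_iff {N : ℕ} {a b : Fin N} (hab : (a : ℕ) + 1 = (b : ℕ)) (x y : Fin N) :
    Equiv.swap a b x < Equiv.swap a b y ↔ ((x = b ∧ y = a) ∨ (x < y ∧ ¬(x = a ∧ y = b))) := by
  simp only [Equiv.swap_apply_def]
  split_ifs <;> simp only [Fin.lt_def, Fin.ext_iff] at * <;> omega

lemma Bprod_swap {N : ℕ} {q : ℂ} {a b : Fin N} (hab : (a : ℕ) + 1 = (b : ℕ)) (w : Fin N → ℂ)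
    (h1 : w a - q * w b ≠ 0) (h2 : w b - q * w a ≠ 0) :
    (w b - q * w a) * Bprod q (fun i => w (Equiv.swap a b i))
      = -((w a - q * w b) * Bprod q w) := by
  classical
  have hab' : a < b := by rw [Fin.lt_def]; omega
  have hmem : (a, b) ∈ univ.filter (fun p : Fin N × Fin N => p.1 < p.2) := by
    simp [hab']
  have hnotmem : (b, a) ∉ (univ.filter (fun p : Fin N × Fin N => p.1 < p.2)).erase (a, b) := by
    simp only [Finset.mem_erase, Finset.mem_filter, Finset.mem_univ, true_and]
    rintro ⟨-, h⟩
    rw [Fin.lt_def] at h; omega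
  have himg : (univ.filter (fun p : Fin N × Fin N => p.1 < p.2)).image (swE a b)
      = insert (b, a) ((univ.filter (fun p : Fin N × Fin N => p.1 < p.2)).erase (a, b)) := by
    ext ⟨x, y⟩
    rw [mem_image_swE]
    simp only [swE, Finset.mem_insert, Finset.mem_erase, Finset.mem_filter,
      Finset.mem_univ, true_and, Prod.mk.injEq, ne_eq, Prod.ext_iff]
    rw [swap_lt_iff hab]
    tauto
  have hinj : ∀ x ∈ univ.filter (fun p : Fin N × Fin N => p.1 < p.2),
      ∀ y ∈ univ.filter (fun p : Fin N × Fin N => p.1 < p.2), swE a b x = swE a b y → x = y :=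
    fun x _ y _ h => by rw [← swE_invol a b x, h, swE_invol]
  have key : Bprod q (fun i => w (Equiv.swap a b i))
      = ∏ p ∈ (univ.filter (fun p : Fin N × Fin N => p.1 < p.2)).image (swE a b),
          (w p.1 - w p.2) / (w p.1 - q * w p.2) := by
    rw [Finset.prod_image hinj]; rfl
  have key2 : Bprod q w
      = ((w a - w b) / (w a - q * w b)) *
        ∏ p ∈ (univ.filter (fun p : Fin N × Fin N => p.1 < p.2)).erase (a, b),
          (w p.1 - w p.2) / (w p.1 - q * w p.2) :=
    (Finset.mul_prod_erase _ _ hmem).symm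
  rw [key, himg, Finset.prod_insert hnotmem, key2]
  generalize (∏ p ∈ (univ.filter (fun p : Fin N × Fin N => p.1 < p.2)).erase (a, b),
      (w p.1 - w p.2) / (w p.1 - q * w p.2)) = Q
  rw [← mul_assoc, ← mul_assoc, mul_div_cancel₀ _ h2, mul_div_cancel₀ _ h1]
  ring

lemma integrand_antisym (lam : ℝ) (n : ℕ) {N : ℕ} (q : ℝ) (M : Fin N → ℕ)
    {a b : Fin N} (hab : (a : ℕ) + 1 = (b : ℕ)) (hM : M a = M b) (w : Fin N → ℂ)
    (h1 : w a - (q : ℂ) * w b ≠ 0) (h2 : w b - (q : ℂ) * w a ≠ 0) :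
    integrandI lam n q M a (fun i => w (Equiv.swap a b i))
      - (q : ℂ) * integrandI lam n q M b (fun i => w (Equiv.swap a b i))
      = -(integrandI lam n q M a w - (q : ℂ) * integrandI lam n q M b w) := by
  have hMswap : ∀ i, M (Equiv.swap a b i) = M i := by
    intro i
    rcases eq_or_ne i a with rfl | hia
    · rw [Equiv.swap_apply_left]; exact hM.symm
    rcases eq_or_ne i b with rfl | hib
    · rw [Equiv.swap_apply_right]; exact hM
    · rw [Equiv.swap_apply_of_ne_of_ne hia hib]
  have hsum : (∑ i, w (Equiv.swap a b i)) = ∑ i, w i := Equiv.sum_comp (Equiv.swap a b) w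
  have hprod : (∏ i : Fin N, (1 - w (Equiv.swap a b i)) ^ (-(M i : ℤ) - 1) / w (Equiv.swap a b i))
      = ∏ i : Fin N, (1 - w i) ^ (-(M i : ℤ) - 1) / w i := by
    refine Fintype.prod_equiv (Equiv.swap a b)
      (fun i => (1 - w (Equiv.swap a b i)) ^ (-(M i : ℤ) - 1) / w (Equiv.swap a b i))
      (fun i => (1 - w i) ^ (-(M i : ℤ) - 1) / w i) (fun i => ?_)
    simp only [hMswap]
  have hswap := Bprod_swap (q := (q : ℂ)) hab w h1 h2
  simp only [integrandI, hsum, hprod, Equiv.swap_apply_left, Equiv.swap_apply_right]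
  linear_combination ((∑ p ∈ Finset.range (n - 1), (lam : ℂ) ^ p * (∑ i, w i) ^ (n - 2 - p)) *
    ∏ i : Fin N, (1 - w i) ^ (-(M i : ℤ) - 1) / w i) * hswap

open MeasureTheory Set in
lemma itCircleInt_eq_torusIntegral (N : ℕ) :
    ∀ (c : Fin N → ℂ) (r : Fin N → ℝ) (f : (Fin N → ℂ) → ℂ),
      Continuous (fun θ : Fin N → ℝ => f (torusMap c r θ)) →
      itCircleInt N c r f = torusIntegral f c r := by
  induction N with
  | zero =>
    intro c r f _
    rw [torusIntegral_dim0]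
    exact congrArg f (Subsingleton.elim _ _)
  | succ n IH =>
    intro c r f hf
    have hti : TorusIntegrable f c r :=
      hf.continuousOn.integrableOn_compact isCompact_Icc
    rw [itCircleInt, torusIntegral_succ hti]
    unfold circleIntegral
    refine intervalIntegral.integral_congr fun θ _ => ?_
    congr 1
    have hc : ∀ Θ : Fin n → ℝ, torusMap c r (Fin.cons θ Θ)
        = Fin.cons (circleMap (c 0) (r 0) θ)
            (torusMap (c ∘ Fin.succ) (r ∘ Fin.succ) Θ) := by
      intro Θ; funext i
      refine Fin.cases ?_ (fun j => ?_) i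
      · simp [torusMap, circleMap]
      · simp [torusMap, circleMap]
    have hconsc : Continuous fun Θ : Fin n → ℝ => (Fin.cons θ Θ : Fin (n+1) → ℝ) := by
      refine continuous_pi fun i => ?_
      refine Fin.cases ?_ (fun j => ?_) i
      · simpa using continuous_const
      · simpa using continuous_apply j
    have hcont : Continuous fun Θ : Fin n → ℝ =>
        f (Fin.cons (circleMap (c 0) (r 0) θ) (torusMap (c ∘ Fin.succ) (r ∘ Fin.succ) Θ)) := by
      simp only [← hc]
      exact hf.comp hconsc
    exact IH _ _ _ hcont

open MeasureTheory Set Complex in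
lemma torusIntegral_perm {N : ℕ} (σ : Equiv.Perm (Fin N)) (R : ℝ) (f : (Fin N → ℂ) → ℂ) :
    torusIntegral (fun x => f (fun i => x (σ i))) (fun _ => 0) (fun _ => R)
      = torusIntegral f (fun _ => 0) (fun _ => R) := by
  have hmp : MeasurePreserving (⇑(MeasurableEquiv.piCongrLeft (fun _ : Fin N => ℝ) σ).symm)
      (volume : Measure (Fin N → ℝ)) volume :=
    (volume_measurePreserving_piCongrLeft (fun _ : Fin N => ℝ) σ).symm
  have happ : ∀ (θ : Fin N → ℝ) (i : Fin N),
      (MeasurableEquiv.piCongrLeft (fun _ : Fin N => ℝ) σ).symm θ i = θ (σ i) := by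
    intro θ i; rfl
  have hpre : (⇑(MeasurableEquiv.piCongrLeft (fun _ : Fin N => ℝ) σ).symm) ⁻¹'
      (Icc (0 : Fin N → ℝ) fun _ => 2 * Real.pi) = Icc 0 fun _ => 2 * Real.pi := by
    ext θ
    simp only [Set.mem_preimage, Set.mem_Icc, Pi.le_def, happ]
    constructor
    · rintro ⟨h1, h2⟩
      refine ⟨fun i => ?_, fun i => ?_⟩
      · simpa using h1 (σ.symm i)
      · simpa using h2 (σ.symm i)
    · rintro ⟨h1, h2⟩
      exact ⟨fun i => h1 (σ i), fun i => h2 (σ i)⟩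
  rw [torusIntegral, torusIntegral,
    ← hmp.setIntegral_preimage_emb (MeasurableEquiv.measurableEmbedding _)
      (fun θ => (∏ i, (R : ℂ) * exp (θ i * I) * I) • f (torusMap (fun _ => 0) (fun _ => R) θ))
      (Icc (0 : Fin N → ℝ) fun _ => 2 * Real.pi), hpre]
  refine setIntegral_congr_fun measurableSet_Icc fun θ _ => ?_
  simp only [happ]
  rw [← Equiv.prod_comp σ fun i => (R : ℂ) * exp (θ i * I) * I]
  congr 1

open MeasureTheory Set Complex in
lemma torusMap_abs (R : ℝ) (hR : 0 < R) {N : ℕ} (θ : Fin N → ℝ) (i : Fin N) :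
    ‖torusMap (fun _ => 0) (fun _ => R) θ i‖ = R := by
  simp [torusMap, norm_exp_ofReal_mul_I, abs_of_pos hR]

open MeasureTheory Set Complex in
lemma integrand_torus_continuous (lam : ℝ) (n : ℕ) {N : ℕ} {q R : ℝ}
    (hq0 : 0 < q) (hq1 : q < 1) (hR : 1 < R) (M : Fin N → ℕ) (a : Fin N) :
    Continuous fun θ : Fin N → ℝ =>
      integrandI lam n q M a (torusMap (fun _ => 0) (fun _ => R) θ) := by
  have hR0 : (0 : ℝ) < R := by linarith
  have hW : Continuous fun θ : Fin N → ℝ => torusMap (fun _ => 0) (fun _ => R) θ := by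
    refine continuous_pi fun i => ?_
    simp only [torusMap]
    fun_prop
  have hWi : ∀ i : Fin N, Continuous fun θ : Fin N → ℝ =>
      torusMap (fun _ => 0) (fun _ => R) θ i := fun i => (continuous_apply i).comp hW
  unfold integrandI
  refine ((Continuous.mul (Continuous.mul ?_ ?_) ?_).mul ?_)
  · exact hWi a
  · refine continuous_finset_sum _ fun p _ => ?_
    exact (continuous_const.mul (((continuous_finset_sum _ fun i _ => hWi i)).pow _))
  · unfold Bprod
    refine continuous_finset_prod _ fun p _ => ?_
    refine Continuous.div ((hWi p.1).sub (hWi p.2))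
      ((hWi p.1).sub (continuous_const.mul (hWi p.2))) fun θ => ?_
    intro h
    rw [sub_eq_zero] at h
    have h2 : ‖torusMap (fun _ => 0) (fun _ => R) θ p.1‖
        = ‖(q : ℂ) * torusMap (fun _ => 0) (fun _ => R) θ p.2‖ := by rw [h]
    rw [norm_mul, torusMap_abs R hR0, torusMap_abs R hR0, Complex.norm_real, Real.norm_eq_abs,
      abs_of_pos hq0] at h2
    nlinarith
  · refine continuous_finset_prod _ fun i _ => ?_
    refine Continuous.div ?_ (hWi i) fun θ => ?_
    · refine Continuous.zpow₀ (continuous_const.sub (hWi i)) _ fun θ => Or.inl ?_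
      intro h
      rw [Pi.sub_apply, sub_eq_zero] at h
      have := torusMap_abs R hR0 θ i
      rw [← h] at this
      simp at this
      linarith
    · intro h
      have := torusMap_abs R hR0 θ i
      rw [h] at this
      simp at this
      linarith

open MeasureTheory Set Complex in
lemma torus_ne {q R : ℝ} (hq0 : 0 < q) (hq1 : q < 1) (hR0 : 0 < R) {N : ℕ}
    (θ : Fin N → ℝ) (i j : Fin N) :
    torusMap (fun _ => 0) (fun _ => R) θ i - (q : ℂ) * torusMap (fun _ => 0) (fun _ => R) θ j
      ≠ 0 := by
  intro h
  rw [sub_eq_zero] at h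
  have h2 : ‖torusMap (fun _ => 0) (fun _ => R) θ i‖
      = ‖(q : ℂ) * torusMap (fun _ => 0) (fun _ => R) θ j‖ := by rw [h]
  rw [norm_mul, torusMap_abs R hR0, torusMap_abs R hR0, Complex.norm_real, Real.norm_eq_abs, abs_of_pos hq0] at h2
  nlinarith

open MeasureTheory Set Complex in
lemma torus_step (lam : ℝ) (n : ℕ) {N : ℕ} {q R : ℝ}
    (hq0 : 0 < q) (hq1 : q < 1) (hR : 1 < R) (M : Fin N → ℕ)
    {a b : Fin N} (hab : (a : ℕ) + 1 = (b : ℕ)) (hM : M a = M b) :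
    torusIntegral (integrandI lam n q M a) (fun _ => 0) (fun _ => R)
      = (q : ℂ) * torusIntegral (integrandI lam n q M b) (fun _ => 0) (fun _ => R) := by
  have hR0 : (0 : ℝ) < R := by linarith
  have hA := integrand_torus_continuous lam n hq0 hq1 hR M a
  have hB := integrand_torus_continuous lam n hq0 hq1 hR M b
  have hTA : TorusIntegrable (integrandI lam n q M a) (fun _ => 0) (fun _ => R) :=
    hA.continuousOn.integrableOn_compact isCompact_Icc
  have hTB : TorusIntegrable (integrandI lam n q M b) (fun _ => 0) (fun _ => R) :=
    hB.continuousOn.integrableOn_compact isCompact_Icc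
  have hTB' : TorusIntegrable (fun w => (q : ℂ) * integrandI lam n q M b w)
      (fun _ => 0) (fun _ => R) := hTB.const_mul _
  set h : (Fin N → ℂ) → ℂ :=
    fun w => integrandI lam n q M a w - (q : ℂ) * integrandI lam n q M b w with hh
  have hsub : torusIntegral h (fun _ => 0) (fun _ => R)
      = torusIntegral (integrandI lam n q M a) (fun _ => 0) (fun _ => R)
        - (q : ℂ) * torusIntegral (integrandI lam n q M b) (fun _ => 0) (fun _ => R) := by
    rw [hh]
    rw [torusIntegral_sub hTA hTB', torusIntegral_const_mul]
  have hperm := torusIntegral_perm (Equiv.swap a b) R h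
  have hneg : torusIntegral (fun x => h (fun i => x (Equiv.swap a b i))) (fun _ => 0)
      (fun _ => R) = torusIntegral (fun x => -(h x)) (fun _ => 0) (fun _ => R) := by
    rw [torusIntegral, torusIntegral]
    refine setIntegral_congr_fun measurableSet_Icc fun θ _ => ?_
    congr 1
    exact integrand_antisym lam n q M hab hM _
      (torus_ne hq0 hq1 hR0 θ a b) (torus_ne hq0 hq1 hR0 θ b a)
  have hzero : torusIntegral h (fun _ => 0) (fun _ => R) = 0 := by
    have hn := torusIntegral_neg h (fun _ => 0) (fun _ => R)
    have : torusIntegral h (fun _ => 0) (fun _ => R)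
        = -torusIntegral h (fun _ => 0) (fun _ => R) := by
      conv_lhs => rw [← hperm, hneg]
      exact hn
    have h2 : (2 : ℂ) * torusIntegral h (fun _ => 0) (fun _ => R) = 0 := by
      linear_combination this
    have := mul_eq_zero.mp h2
    simpa using this
  rw [hsub] at hzero
  linear_combination hzero

/-- If `M_j = M_{j+1} = ⋯ = M_k` (1-indexed), then the iterated circle integrals `I_a`
over circles `|w| = R > 1` satisfy `I_k = q^{j−k}·I_j`. -/
theorem integral_q_shift (q : ℝ) (hq0 : 0 < q) (hq1 : q < 1)
    (N : ℕ) (hN : 1 ≤ N) (R : ℝ) (hR : 1 < R) (lam : ℝ) (n : ℕ) (hn : 1 ≤ n)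
    (M : Fin N → ℕ) (j k : ℕ) (hj : 1 ≤ j) (hjk : j ≤ k) (hkN : k ≤ N)
    (hM : ∀ i : Fin N, j - 1 ≤ (i : ℕ) → (i : ℕ) ≤ k - 1 → M i = M ⟨j - 1, by omega⟩) :
    itCircleInt N (fun _ => 0) (fun _ => R) (integrandI lam n q M ⟨k - 1, by omega⟩)
      = (q : ℂ) ^ ((j : ℤ) - (k : ℤ)) *
        itCircleInt N (fun _ => 0) (fun _ => R) (integrandI lam n q M ⟨j - 1, by omega⟩) := by
  have hqne : (q : ℂ) ≠ 0 := by
    simpa using ne_of_gt hq0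
  have hconv : ∀ a : Fin N, itCircleInt N (fun _ => 0) (fun _ => R) (integrandI lam n q M a)
      = torusIntegral (integrandI lam n q M a) (fun _ => 0) (fun _ => R) := fun a =>
    itCircleInt_eq_torusIntegral N _ _ _ (integrand_torus_continuous lam n hq0 hq1 hR M a)
  rw [hconv, hconv]
  have key : ∀ m : ℕ, j - 1 ≤ m → ∀ (hmN : m < N), m ≤ k - 1 →
      torusIntegral (integrandI lam n q M ⟨m, hmN⟩) (fun _ => 0) (fun _ => R)
        = (q : ℂ) ^ ((j : ℤ) - 1 - (m : ℤ)) *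
          torusIntegral (integrandI lam n q M ⟨j - 1, by omega⟩) (fun _ => 0) (fun _ => R) := by
    intro m hm
    induction m, hm using Nat.le_induction with
    | base =>
      intro hmN _
      have he : ((j : ℤ) - 1 - ((j - 1 : ℕ) : ℤ)) = 0 := by omega
      rw [he, zpow_zero, one_mul]
    | succ m hm IH =>
      intro hmN hm2
      have hmN' : m < N := by omega
      have hm2' : m ≤ k - 1 := by omega
      have hMeq : M ⟨m, hmN'⟩ = M ⟨m + 1, hmN⟩ := by
        rw [hM ⟨m, hmN'⟩ (by simpa using hm) (by simpa using hm2'),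
          hM ⟨m + 1, hmN⟩ (by simp; omega) (by simpa using hm2)]
      have hstep := torus_step lam n hq0 hq1 hR M
        (a := ⟨m, hmN'⟩) (b := ⟨m + 1, hmN⟩) rfl hMeq
      have IH' := IH hmN' hm2'
      have hmain : (q : ℂ) * torusIntegral (integrandI lam n q M ⟨m + 1, hmN⟩)
            (fun _ => 0) (fun _ => R)
          = (q : ℂ) * ((q : ℂ) ^ ((j : ℤ) - 1 - ((m : ℤ) + 1)) *
            torusIntegral (integrandI lam n q M ⟨j - 1, by omega⟩) (fun _ => 0)
              (fun _ => R)) := by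
        rw [← hstep, IH']
        have : ((j : ℤ) - 1 - ((m : ℤ) + 1)) = ((j : ℤ) - 1 - (m : ℤ)) - 1 := by ring
        rw [this, zpow_sub_one₀ hqne]
        field_simp
      have := mul_left_cancel₀ hqne hmain
      push_cast
      push_cast at this
      exact this
  have hfin := key (k - 1) (by omega) (by omega) (le_refl _)
  have he : ((j : ℤ) - 1 - ((k - 1 : ℕ) : ℤ)) = (j : ℤ) - (k : ℤ) := by omega
  rw [he] at hfin
  exact hfin
end
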